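/- arXiv:2604.23433 — 5 statements merged into one kernel-verified Lean document; each statement's English description precedes it below -/
import Mathlib

section
/- Let 1 ≤ α ≤ θ < ω₁ and let X ⊆ ω^θ + 1 be a subset that is order-isomorphic via a homeomorphism (with respect to the subspace and order topologies) to ω^α + 1. Then the order type of the set CB(X) = {CB(x) : x ∈ X} is at least α + 1. -/
open Ordinal Set

/-- Cantor–Bendixson rank of an ordinal: the exponent of the last term of its
Cantor normal form, with `CB 0 = 0`. -/
noncomputable def CB (o : Ordinal) : Ordinal :=
  ((Ordinal.CNF Ordinal.omega0 o).getLast?.map Prod.fst).getD 0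

/-- `X` is a closed copy of the ordinal `β`: there is an order isomorphism onto
`Iio β` (with the topology induced from the order topology on `Ordinal`) which
is a homeomorphism. -/
def IsClosedCopy (X : Set Ordinal) (β : Ordinal) : Prop :=
  ∃ f : X ≃o (Set.Iio β), Continuous f ∧ Continuous f.symm

/-- `X` is homogeneous of color `i` for the pair coloring `c`. -/
def Homog (c : Ordinal → Ordinal → Fin 2) (X : Set Ordinal) (i : Fin 2) : Prop :=
  ∀ x ∈ X, ∀ y ∈ X, x < y → c x y = i

/-- The closed partition relation `γ →_cl (α,β)²`. -/
def ClPartition (γ α β : Ordinal) : Prop :=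
  ∀ c : Ordinal → Ordinal → Fin 2,
    (∃ X ⊆ Set.Iio γ, IsClosedCopy X α ∧ Homog c X 0) ∨
    (∃ X ⊆ Set.Iio γ, IsClosedCopy X β ∧ Homog c X 1)

/-- `X` is an order-isomorphic copy of the ordinal `β`. -/
def IsOrderCopy (X : Set Ordinal) (β : Ordinal) : Prop :=
  Nonempty (X ≃o Set.Iio β)

/-- The classical partition relation `γ → (α,β)²`. -/
def ClassPartition (γ α β : Ordinal) : Prop :=
  ∀ c : Ordinal → Ordinal → Fin 2,
    (∃ X ⊆ Set.Iio γ, IsOrderCopy X α ∧ Homog c X 0) ∨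
    (∃ X ⊆ Set.Iio γ, IsOrderCopy X β ∧ Homog c X 1)

/-- The ordinal Ramsey number `R(α,β)`: least `γ` with `γ → (α,β)²`. -/
noncomputable def Rord (α β : Ordinal) : Ordinal := sInf {γ | ClassPartition γ α β}

/-- The closed Ramsey number `R^cl(α,β)`: least `γ` with `γ →_cl (α,β)²`. -/
noncomputable def Rcl (α β : Ordinal) : Ordinal := sInf {γ | ClPartition γ α β}

/-- The first uncountable ordinal. -/
noncomputable def omega1 : Ordinal := (Cardinal.aleph 1).ord


section Aux
open Ordinal Set

lemma CNF_ne_nil {o : Ordinal} (ho : o ≠ 0) : Ordinal.CNF ω o ≠ [] := by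
  rw [Ordinal.CNF.ne_zero ho]; exact List.cons_ne_nil _ _

lemma CB_le_log {x : Ordinal} (hx : x ≠ 0) : CB x ≤ Ordinal.log ω x := by
  have h := CNF_ne_nil hx
  rw [CB, List.getLast?_eq_getLast h]
  exact Ordinal.CNF.fst_le_log (List.getLast_mem h)

lemma CB_cons {o x : Ordinal} (ho : o ≠ 0) (hx : x ≠ 0)
    (hmod : o % ω ^ Ordinal.log ω o = x) : CB o = CB x := by
  rw [CB, Ordinal.CNF.ne_zero ho, hmod]
  obtain ⟨p, l, hl⟩ := List.exists_cons_of_ne_nil (CNF_ne_nil hx)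
  rw [hl, List.getLast?_cons_cons, ← hl, CB]

/-- L1 -/
lemma CB_opow_mul_add {l m x : Ordinal} (hm : m < ω) (hx : 0 < x) (hxl : x < ω ^ l) :
    CB (ω ^ l * m + x) = CB x := by
  rcases eq_or_ne m 0 with rfl | hm0
  · rw [mul_zero, zero_add]
  · have ho : ω ^ l * m + x ≠ 0 := by
      intro h
      exact hx.ne' (by simpa using (add_eq_zero_iff.mp h).2)
    have hlog : Ordinal.log ω (ω ^ l * m + x) = l := by
      rw [Ordinal.log_opow_mul_add one_lt_omega0 hm0 hxl, Ordinal.log_eq_zero hm, add_zero]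
    refine CB_cons ho hx.ne' ?_
    rw [hlog, Ordinal.mul_add_mod_self, Ordinal.mod_eq_of_lt hxl]

lemma CB_opow_mul {l c : Ordinal} (hc : c ≠ 0) (hcω : c < ω) : CB (ω ^ l * c) = l := by
  have ho : ω ^ l * c ≠ 0 := _root_.mul_ne_zero (Ordinal.opow_ne_zero l omega0_ne_zero) hc
  have hlog : Ordinal.log ω (ω ^ l * c) = l := by
    rw [Ordinal.log_opow_mul one_lt_omega0 l hc, Ordinal.log_eq_zero hcω, add_zero]
  have hmod : ω ^ l * c % ω ^ l = 0 := by
    have := Ordinal.mul_add_mod_self (ω ^ l) c 0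
    simpa using this
  rw [CB, Ordinal.CNF.ne_zero ho, hlog, hmod, Ordinal.CNF.zero_right]
  simp

/-- L2 -/
lemma CB_decomp : ∀ o : Ordinal, o ≠ 0 →
    ∃ γ, o = γ + ω ^ CB o ∧ ∀ x, γ < x → x < o → CB x < CB o := by
  intro o
  induction o using Ordinal.induction with
  | h o IH =>
  intro ho
  have hrec : ω ^ Ordinal.log ω o * (o / ω ^ Ordinal.log ω o) + o % ω ^ Ordinal.log ω o = o :=
    Ordinal.div_add_mod o _
  set l := Ordinal.log ω o with hl
  set c := o / ω ^ l with hc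
  set r := o % ω ^ l with hrdef
  have hc0 : c ≠ 0 := (Ordinal.div_opow_log_pos ω ho).ne'
  have hcω : c < ω := Ordinal.div_opow_log_lt o one_lt_omega0
  have hrl : r < ω ^ l := Ordinal.mod_lt o (Ordinal.opow_ne_zero l omega0_ne_zero)
  rcases eq_or_ne r 0 with hr | hr
  · -- r = 0
    have ho' : o = ω ^ l * c := by rw [← hrec, hr, add_zero]
    have hCB : CB o = l := by rw [ho', CB_opow_mul hc0 hcω]
    obtain ⟨n, hn⟩ := Ordinal.lt_omega0.1 hcω
    obtain ⟨m, rfl⟩ : ∃ m, n = m + 1 := by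
      cases n with
      | zero => exact absurd (by simpa using hn) hc0
      | succ m => exact ⟨m, rfl⟩
    refine ⟨ω ^ l * m, ?_, ?_⟩
    · rw [hCB, ho', hn]
      push_cast
      rw [mul_add, mul_one]
    · intro x hγx hxo
      have hxeq : ω ^ l * m + (x - ω ^ l * m) = x :=
        Ordinal.add_sub_cancel_of_le hγx.le
      set δ := x - ω ^ l * m with hδdef
      have hδ0 : 0 < δ := by
        rw [pos_iff_ne_zero]
        intro h
        rw [h, add_zero] at hxeq
        exact hγx.ne hxeq
      have hδl : δ < ω ^ l := by
        have : ω ^ l * m + δ < ω ^ l * m + ω ^ l := by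
          rw [hxeq]
          calc x < o := hxo
          _ = ω ^ l * m + ω ^ l := by rw [ho', hn]; push_cast; rw [mul_add, mul_one]
        exact (add_lt_add_iff_left _).1 this
      have hCBx : CB x = CB δ := by
        rw [← hxeq, CB_opow_mul_add (nat_lt_omega0 m) hδ0 hδl]
      rw [hCBx, hCB]
      calc CB δ ≤ Ordinal.log ω δ := CB_le_log hδ0.ne'
      _ < l := (Ordinal.lt_opow_iff_log_lt one_lt_omega0 hδ0.ne').1 hδl
  · -- r ≠ 0
    have hro : r < o := Ordinal.mod_opow_log_lt_self ω ho
    have hCBor : CB o = CB r := CB_cons ho hr rfl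
    obtain ⟨γ', hγ'eq, hγ'prop⟩ := IH r hro hr
    refine ⟨ω ^ l * c + γ', ?_, ?_⟩
    · rw [hCBor, add_assoc, ← hγ'eq, hrec]
    · intro x hγx hxo
      have hxeq : (ω ^ l * c + γ') + (x - (ω ^ l * c + γ')) = x :=
        Ordinal.add_sub_cancel_of_le hγx.le
      set δ := x - (ω ^ l * c + γ') with hδdef
      have hδ0 : 0 < δ := by
        rw [pos_iff_ne_zero]
        intro h
        rw [h, add_zero] at hxeq
        exact hγx.ne hxeq
      have hδr : δ < ω ^ CB r := by
        have : (ω ^ l * c + γ') + δ < (ω ^ l * c + γ') + ω ^ CB r := by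
          rw [hxeq]
          calc x < o := hxo
          _ = (ω ^ l * c + γ') + ω ^ CB r := by rw [add_assoc, ← hγ'eq, hrec]
        exact (add_lt_add_iff_left _).1 this
      have h1 : γ' + δ < r := by
        rw [hγ'eq]
        exact add_lt_add_right hδr γ'
      have h3 : 0 < γ' + δ := hδ0.trans_le le_add_self
      have hCBx : CB x = CB (γ' + δ) := by
        rw [← hxeq, add_assoc, CB_opow_mul_add hcω h3 (h1.trans hrl)]
      rw [hCBx, hCBor]
      exact hγ'prop _ (lt_add_of_pos_right γ' hδ0) h1

noncomputable def otp (S : Set Ordinal) : Ordinal := Ordinal.type (α := S) (· < ·)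

lemma otp_mono {S T : Set Ordinal} (h : S ⊆ T) : otp S ≤ otp T := by
  rw [otp, otp, Ordinal.type_le_iff']
  exact ⟨⟨⟨Set.inclusion h, Set.inclusion_injective h⟩, Iff.rfl⟩⟩

lemma otp_pos_of_nonempty {S : Set Ordinal} (h : S.Nonempty) : 0 < otp S :=
  pos_iff_ne_zero.2 (Ordinal.type_ne_zero_iff_nonempty.2 h.to_subtype)

lemma otp_lt_of_bound {T S : Set Ordinal} (hTS : T ⊆ S) {e : Ordinal} (he : e ∈ S)
    (hub : ∀ x ∈ T, x < e) : otp T < otp S := by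
  have h1 : otp T ≤ Ordinal.typein (α := S) (· < ·) ⟨e, he⟩ := by
    rw [← Ordinal.type_subrel, otp, Ordinal.type_le_iff']
    refine ⟨⟨⟨fun x => ⟨⟨x.1, hTS x.2⟩, hub x.1 x.2⟩, ?_⟩, ?_⟩⟩
    · intro a b hab
      ext
      simpa using congrArg (fun z => z.1.1) hab
    · intro a b
      exact Iff.rfl
  exact h1.trans_lt (Ordinal.typein_lt_type _ _)

lemma exists_emb {κ : Ordinal} {S : Set Ordinal} (h : κ ≤ otp S) :
    Nonempty (Set.Iio κ ↪o S) := by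
  haveI : IsWellOrder κ.ToType (· < ·) := isWellOrder_lt
  have h2 : Ordinal.type (α := κ.ToType) (· < ·) ≤ Ordinal.type (α := S) (· < ·) := by
    rw [Ordinal.type_toType]; exact h
  obtain ⟨emb⟩ := Ordinal.type_le_iff'.1 h2
  exact ⟨((Ordinal.ToType.mk (o := κ)).toOrderEmbedding).trans
    (RelEmbedding.orderEmbeddingOfLTEmbedding emb)⟩

def GoodCond {α : Ordinal} {X : Set Ordinal} (f : X ≃o Set.Iio (ω ^ α + 1)) : Prop :=
  ∀ x : X, Order.IsSuccLimit ((f x : Ordinal)) →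
    ∀ γ < (x : Ordinal), ∃ y ∈ X, γ < y ∧ y < (x : Ordinal)

def Good (α : Ordinal) (X : Set Ordinal) : Prop :=
  ∃ f : X ≃o Set.Iio (ω ^ α + 1), GoodCond f

lemma good_of_closedCopy {α : Ordinal} {X : Set Ordinal}
    (h : IsClosedCopy X (ω ^ α + 1)) : Good α X := by
  obtain ⟨f, _, hfs⟩ := h
  refine ⟨f, ?_⟩
  intro x hlim γ hγ
  have hg : Continuous fun z : Set.Iio (ω ^ α + 1) => ((f.symm z : Ordinal)) :=
    continuous_subtype_val.comp hfs
  have hopen : IsOpen ((fun z : Set.Iio (ω ^ α + 1) => ((f.symm z : Ordinal))) ⁻¹' Set.Ioi γ) :=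
    isOpen_Ioi.preimage hg
  obtain ⟨U, hU, hUeq⟩ := isOpen_induced_iff.1 hopen
  have hmem : ((f x : Ordinal)) ∈ U := by
    have : f x ∈ (fun z : Set.Iio (ω ^ α + 1) => ((f.symm z : Ordinal))) ⁻¹' Set.Ioi γ := by
      simp only [Set.mem_preimage, OrderIso.symm_apply_apply, Set.mem_Ioi]
      exact hγ
    rw [← hUeq] at this
    exact this
  obtain ⟨δ, hδ, hδU⟩ := (SuccOrder.hasBasis_nhds_Ioc_of_exists_lt ⟨0, hlim.pos⟩).mem_iff.1 (hU.mem_nhds hmem)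
  have hsucc : δ + 1 < ((f x : Ordinal)) := by
    have := hlim.succ_lt hδ
    rwa [← Ordinal.add_one_eq_succ] at this
  have hη : δ + 1 ∈ Set.Iio (ω ^ α + 1) := hsucc.trans (f x).2
  have hz : (⟨δ + 1, hη⟩ : Set.Iio (ω ^ α + 1)) ∈ Subtype.val ⁻¹' U := by
    exact hδU ⟨lt_add_of_pos_right δ zero_lt_one, hsucc.le⟩
  rw [hUeq] at hz
  refine ⟨(f.symm ⟨δ + 1, hη⟩ : Ordinal), (f.symm ⟨δ + 1, hη⟩).2, hz, ?_⟩
  have : f.symm ⟨δ + 1, hη⟩ < f.symm (f x) := f.symm.lt_iff_lt.2 hsucc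
  rwa [OrderIso.symm_apply_apply] at this

lemma olt_add_one {a b : Ordinal} : a < b + 1 ↔ a ≤ b := by
  rw [Ordinal.add_one_eq_succ]; exact Order.lt_succ_iff

lemma good_segment {α : Ordinal} {X : Set Ordinal} (f : X ≃o Set.Iio (ω ^ α + 1))
    (hf : GoodCond f) {β ζ : Ordinal} (hζ1 : ζ < ω ^ α + 1) (hζ2 : ζ + ω ^ β < ω ^ α + 1) :
    Good β (X ∩ Set.Icc ((f.symm ⟨ζ, hζ1⟩ : X) : Ordinal)
      ((f.symm ⟨ζ + ω ^ β, hζ2⟩ : X) : Ordinal)) := by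
  set x1 : Ordinal := ((f.symm ⟨ζ, hζ1⟩ : X) : Ordinal) with hx1
  set x2 : Ordinal := ((f.symm ⟨ζ + ω ^ β, hζ2⟩ : X) : Ordinal) with hx2
  set Y : Set Ordinal := X ∩ Set.Icc x1 x2 with hY
  have hmemX : ∀ y : Y, (y : Ordinal) ∈ X := fun y => y.2.1
  have hy1 : ∀ y : Y, ζ ≤ ((f ⟨y.1, y.2.1⟩ : Ordinal)) := by
    intro y
    have h1 : f.symm ⟨ζ, hζ1⟩ ≤ (⟨y.1, y.2.1⟩ : X) := Subtype.coe_le_coe.1 y.2.2.1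
    have := f.le_iff_le.2 h1
    rwa [OrderIso.apply_symm_apply] at this
  have hy2 : ∀ y : Y, ((f ⟨y.1, y.2.1⟩ : Ordinal)) ≤ ζ + ω ^ β := by
    intro y
    have h1 : (⟨y.1, y.2.1⟩ : X) ≤ f.symm ⟨ζ + ω ^ β, hζ2⟩ := Subtype.coe_le_coe.1 y.2.2.2
    have := f.le_iff_le.2 h1
    rwa [OrderIso.apply_symm_apply] at this
  have hcancel : ∀ y : Y, ζ + ((f ⟨y.1, y.2.1⟩ : Ordinal) - ζ) = (f ⟨y.1, y.2.1⟩ : Ordinal) :=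
    fun y => Ordinal.add_sub_cancel_of_le (hy1 y)
  have hsub_lt : ∀ y : Y, (f ⟨y.1, y.2.1⟩ : Ordinal) - ζ < ω ^ β + 1 := by
    intro y
    exact olt_add_one.2 (Ordinal.sub_le.2 (hy2 y))
  have hle : ∀ ξ : Set.Iio (ω ^ β + 1), (ξ : Ordinal) ≤ ω ^ β := fun ξ => olt_add_one.1 ξ.2
  have hto : ∀ ξ : Set.Iio (ω ^ β + 1), ζ + (ξ : Ordinal) < ω ^ α + 1 := by
    intro ξ
    exact lt_of_le_of_lt (add_le_add_right (hle ξ) ζ) hζ2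
  have htos : ∀ y : Y, ζ + ((f ⟨y.1, y.2.1⟩ : Ordinal) - ζ) < ω ^ α + 1 := by
    intro y
    rw [hcancel y]
    exact (f ⟨y.1, y.2.1⟩).2
  have hinvY : ∀ ξ : Set.Iio (ω ^ β + 1), ((f.symm ⟨ζ + ξ, hto ξ⟩ : X) : Ordinal) ∈ Y := by
    intro ξ
    refine ⟨(f.symm ⟨ζ + ξ, hto ξ⟩).2, ?_, ?_⟩
    · exact Subtype.coe_le_coe.2 (f.symm.le_iff_le.2 (Subtype.mk_le_mk.2 le_self_add))
    · exact Subtype.coe_le_coe.2 (f.symm.le_iff_le.2 (Subtype.mk_le_mk.2 (add_le_add_right (hle ξ) ζ)))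
  let g : Y ≃o Set.Iio (ω ^ β + 1) :=
    { toFun := fun y => ⟨(f ⟨y.1, y.2.1⟩ : Ordinal) - ζ, hsub_lt y⟩
      invFun := fun ξ => ⟨((f.symm ⟨ζ + ξ, hto ξ⟩ : X) : Ordinal), hinvY ξ⟩
      left_inv := by
        intro y
        apply Subtype.ext
        have h1 : (⟨ζ + ((f ⟨y.1, y.2.1⟩ : Ordinal) - ζ), htos y⟩ : Set.Iio (ω ^ α + 1)) =
            f ⟨y.1, y.2.1⟩ := Subtype.ext (hcancel y)
        show ((f.symm ⟨ζ + ((f ⟨y.1, y.2.1⟩ : Ordinal) - ζ), htos y⟩ : X) : Ordinal) = y.1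
        rw [h1, OrderIso.symm_apply_apply]
      right_inv := by
        intro ξ
        apply Subtype.ext
        show (f ⟨((f.symm ⟨ζ + ξ, hto ξ⟩ : X) : Ordinal), _⟩ : Ordinal) - ζ = (ξ : Ordinal)
        have h1 : (⟨((f.symm ⟨ζ + ξ, hto ξ⟩ : X) : Ordinal), _⟩ : X) = f.symm ⟨ζ + ξ, hto ξ⟩ :=
          Subtype.ext rfl
        rw [h1, OrderIso.apply_symm_apply]
        exact Ordinal.add_sub_cancel ζ ξ
      map_rel_iff' := by
        intro y y'
        show ((f ⟨y.1, y.2.1⟩ : Ordinal) - ζ ≤ (f ⟨y'.1, y'.2.1⟩ : Ordinal) - ζ) ↔ y ≤ y'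
        rw [← add_le_add_iff_left ζ, hcancel y, hcancel y']
        rw [Subtype.coe_le_coe, f.le_iff_le]
        exact ⟨fun h => Subtype.coe_le_coe.2 h, fun h => Subtype.mk_le_mk.2 h⟩ }
  refine ⟨g, ?_⟩
  intro y hlim γ hγ
  have hglim : Order.IsSuccLimit ((f ⟨y.1, y.2.1⟩ : Ordinal) - ζ) := hlim
  have hl2 : Order.IsSuccLimit ((f ⟨y.1, y.2.1⟩ : Ordinal)) := by
    rw [← hcancel y]
    exact Ordinal.isSuccLimit_add ζ hglim
  have hx1y : x1 < y.1 := by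
    have h1 : (⟨ζ, hζ1⟩ : Set.Iio (ω ^ α + 1)) < f ⟨y.1, y.2.1⟩ := by
      apply Subtype.mk_lt_mk.2
      calc ζ < ζ + ((f ⟨y.1, y.2.1⟩ : Ordinal) - ζ) := lt_add_of_pos_right ζ hglim.pos
      _ = (f ⟨y.1, y.2.1⟩ : Ordinal) := hcancel y
    have := f.symm.lt_iff_lt.2 h1
    rw [OrderIso.symm_apply_apply] at this
    exact Subtype.coe_lt_coe.2 this
  obtain ⟨z, hzX, hzγ, hzy⟩ := hf ⟨y.1, y.2.1⟩ hl2 (max γ x1) (max_lt hγ hx1y)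
  refine ⟨z, ⟨hzX, ?_, ?_⟩, lt_of_le_of_lt (le_max_left γ x1) hzγ, hzy⟩
  · exact (lt_of_le_of_lt (le_max_right γ x1) hzγ).le
  · exact hzy.le.trans y.2.2.2

universe u

lemma main_lemma : ∀ (α : Ordinal.{u}) (X : Set Ordinal.{u}),
    Good α X → Ordinal.lift.{u + 1} α < otp (CB '' X) := by
  intro α
  induction α using Ordinal.induction with
  | h α IH =>
  intro X hgood
  obtain ⟨f, hf⟩ := hgood
  have htop : (ω ^ α : Ordinal) < ω ^ α + 1 := lt_add_of_pos_right _ zero_lt_one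
  set t : X := f.symm ⟨ω ^ α, htop⟩ with ht
  rcases eq_or_ne α 0 with rfl | hα
  · rw [Ordinal.lift_zero]
    exact otp_pos_of_nonempty ⟨CB t.1, Set.mem_image_of_mem _ t.2⟩
  · have hωlim : Order.IsSuccLimit (ω ^ α) := isSuccLimit_opow_left isSuccLimit_omega0 hα
    have ht0 : (t : Ordinal) ≠ 0 := by
      have h00 : (0 : Ordinal) < ω ^ α + 1 := lt_of_le_of_lt (zero_le) (lt_add_of_pos_right _ zero_lt_one)
      have h0 : (⟨0, h00⟩ : Set.Iio (ω ^ α + 1)) < ⟨ω ^ α, htop⟩ :=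
        Subtype.mk_lt_mk.2 (opow_pos α omega0_pos)
      have h1 := f.symm.lt_iff_lt.2 h0
      exact ((zero_le).trans_lt (Subtype.coe_lt_coe.2 h1)).ne'
    obtain ⟨γ, hγeq, hγprop⟩ := CB_decomp t.1 ht0
    have hγt : γ < t.1 := by
      conv_rhs => rw [hγeq]
      exact lt_add_of_pos_right _ (opow_pos _ omega0_pos)
    set T := CB '' (X ∩ Set.Ioo γ t.1) with hT
    have hstep : ∀ β < α, Ordinal.lift.{u + 1} β < otp T := by
      intro β hβ
      have hflim : Order.IsSuccLimit ((f t : Ordinal)) := by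
        rw [ht, OrderIso.apply_symm_apply]
        exact hωlim
      obtain ⟨y0, hy0X, hy0γ, hy0t⟩ := hf t hflim γ hγt
      set ζ := ((f ⟨y0, hy0X⟩ : Ordinal)) with hζ
      have hζα : ζ < ω ^ α := by
        have h1 : (⟨y0, hy0X⟩ : X) < t := Subtype.mk_lt_mk.2 hy0t
        have h2 := f.lt_iff_lt.2 h1
        rw [ht, OrderIso.apply_symm_apply] at h2
        exact h2
      have hsum : ζ + ω ^ β < ω ^ α :=
        principal_add_omega0_opow α hζα ((opow_lt_opow_iff_right one_lt_omega0).2 hβ)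
      have hζ1 : ζ < ω ^ α + 1 := hζα.trans (lt_add_of_pos_right _ zero_lt_one)
      have hζ2 : ζ + ω ^ β < ω ^ α + 1 := hsum.trans (lt_add_of_pos_right _ zero_lt_one)
      have hseg := good_segment f hf hζ1 hζ2
      have hIH := IH β hβ _ hseg
      refine hIH.trans_le (otp_mono (Set.image_mono ?_))
      intro z hz
      refine ⟨hz.1, ?_, ?_⟩
      · -- γ < z
        have h1 : ((f.symm ⟨ζ, hζ1⟩ : X) : Ordinal) = y0 := by
          have : (⟨ζ, hζ1⟩ : Set.Iio (ω ^ α + 1)) = f ⟨y0, hy0X⟩ := Subtype.ext rfl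
          rw [this, OrderIso.symm_apply_apply]
        have := hz.2.1
        rw [h1] at this
        exact hy0γ.trans_le this
      · -- z < t.1
        have h2 : ((f.symm ⟨ζ + ω ^ β, hζ2⟩ : X) : Ordinal) < t.1 := by
          have h3 : (⟨ζ + ω ^ β, hζ2⟩ : Set.Iio (ω ^ α + 1)) < ⟨ω ^ α, htop⟩ :=
            Subtype.mk_lt_mk.2 hsum
          exact Subtype.coe_lt_coe.2 (f.symm.lt_iff_lt.2 h3)
        exact lt_of_le_of_lt hz.2.2 h2
    have hαT : Ordinal.lift.{u + 1} α ≤ otp T := by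
      refine le_of_forall_lt ?_
      intro c hc
      obtain ⟨β, hβ, rfl⟩ := Ordinal.lt_lift_iff.1 hc
      exact hstep β hβ
    have hlt : otp T < otp (CB '' X) := by
      refine otp_lt_of_bound (Set.image_mono (fun z hz => hz.1))
        (Set.mem_image_of_mem CB t.2) ?_
      rintro v ⟨x, hx, rfl⟩
      exact hγprop x hx.2.1 hx.2.2
    exact hαT.trans_lt hlt

end Aux
/-- If `1 ≤ α ≤ θ < ω₁` and `X ⊆ ω^θ + 1` is a closed copy of `ω^α + 1`, then the
order type of `CB '' X = {CB x : x ∈ X}` is at least `α + 1` (expressed by the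
existence of an order embedding of `Iio (α+1)` into `CB '' X`). -/
theorem stmt_2 (α θ : Ordinal) (h1 : 1 ≤ α) (h2 : α ≤ θ) (h3 : θ < omega1)
    (X : Set Ordinal) (hX : X ⊆ Set.Iio (Ordinal.omega0 ^ θ + 1))
    (hcopy : IsClosedCopy X (Ordinal.omega0 ^ α + 1)) :
    Nonempty (Set.Iio (α + 1) ↪o (CB '' X)) := by
  have h := main_lemma α X (good_of_closedCopy hcopy)
  have h2 : Ordinal.lift.{u_1 + 1, u_1} (α + 1) ≤ otp (CB '' X) := by
    rw [Ordinal.lift_add, Ordinal.lift_one, Ordinal.add_one_eq_succ]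
    exact Order.succ_le_of_lt h
  obtain ⟨emb⟩ := exists_emb h2
  refine ⟨(OrderEmbedding.ofMapLEIff
    (fun x : Set.Iio (α + 1) =>
      (⟨Ordinal.lift x.1, Ordinal.lift_lt.2 x.2⟩ : Set.Iio (Ordinal.lift.{u_1 + 1, u_1} (α + 1))))
    ?_).trans emb⟩
  intro a b
  exact (Ordinal.lift_le).trans Subtype.coe_le_coe
end

section
/- Let 1 ≤ α ≤ θ < ω₁ and let X ⊆ ω^θ be a closed copy of ω^α (an order-homeomorphic copy). Then the order type of the set CB(X) = {CB(x) : x ∈ X} is at least α. -/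
open Ordinal Set

private lemma CB_zero : CB 0 = 0 := by unfold CB; simp [Ordinal.CNF.zero_right]

private lemma CB_rec {o : Ordinal} (ho : o ≠ 0) :
    CB o = if o % omega0 ^ Ordinal.log omega0 o = 0 then Ordinal.log omega0 o
           else CB (o % omega0 ^ Ordinal.log omega0 o) := by
  unfold CB
  rw [Ordinal.CNF.ne_zero ho]
  split_ifs with h
  · rw [h, Ordinal.CNF.zero_right]; rfl
  · rw [Ordinal.CNF.ne_zero h, List.getLast?_cons_cons, ← Ordinal.CNF.ne_zero h]

private lemma CB_le_log_s3 (o : Ordinal) : CB o ≤ Ordinal.log omega0 o := by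
  induction o using Ordinal.induction with
  | h o IH =>
    rcases eq_or_ne o 0 with rfl | ho
    · rw [CB_zero]; exact zero_le
    · rw [CB_rec ho]
      split_ifs with h
      · exact le_rfl
      · have hlt : o % omega0 ^ Ordinal.log omega0 o < o :=
          lt_of_lt_of_le (Ordinal.mod_lt o (Ordinal.opow_ne_zero _ Ordinal.omega0_ne_zero))
            (Ordinal.opow_log_le_self _ ho)
        exact (IH _ hlt).trans (Ordinal.log_mono_right _ hlt.le)

private lemma CB_opow (b : Ordinal) : CB (omega0 ^ b) = b := by
  rw [CB_rec (Ordinal.opow_ne_zero _ Ordinal.omega0_ne_zero),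
    Ordinal.log_opow Ordinal.one_lt_omega0]
  simp [Ordinal.mod_self]

private lemma CB_add (b : Ordinal) (hb : b ≠ 0) : ∀ a, CB (a + b) = CB b := by
  intro a
  induction a using Ordinal.induction with
  | h a IH =>
    set o := a + b with ho_def
    have ho : o ≠ 0 := fun h => hb (by simpa using (Ordinal.add_eq_zero_iff.mp h).2)
    set e := Ordinal.log omega0 o with he
    have hωe : (omega0 : Ordinal) ^ e ≠ 0 := Ordinal.opow_ne_zero _ Ordinal.omega0_ne_zero
    have hle : omega0 ^ e ≤ o := Ordinal.opow_log_le_self _ ho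
    rcases lt_or_ge b (omega0 ^ e) with hbe | hbe
    · -- case b < ω^e
      have hra : a % omega0 ^ e < omega0 ^ e := Ordinal.mod_lt a hωe
      have hsum : a % omega0 ^ e + b < omega0 ^ e :=
        Ordinal.principal_add_omega0_opow e hra hbe
      have hdecomp : o = omega0 ^ e * (a / omega0 ^ e) + (a % omega0 ^ e + b) := by
        rw [← add_assoc, Ordinal.div_add_mod]
      have hmod : o % omega0 ^ e = a % omega0 ^ e + b := by
        rw [hdecomp, Ordinal.mul_add_mod_self, Ordinal.mod_eq_of_lt hsum]
      have hane : a % omega0 ^ e < a := by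
        rcases lt_or_eq_of_le (Ordinal.mod_le a (omega0 ^ e)) with h | h
        · exact h
        · exfalso
          have ha : a < omega0 ^ e := h ▸ hra
          exact absurd (Ordinal.principal_add_omega0_opow e ha hbe) (not_lt.mpr hle)
      have hr0 : o % omega0 ^ e ≠ 0 := by
        rw [hmod]
        intro h
        exact hb (Ordinal.add_eq_zero_iff.mp h).2
      rw [CB_rec ho, ← he, if_neg hr0, hmod, IH _ hane]
    · -- case ω^e ≤ b
      have hblog : Ordinal.log omega0 b = e := by
        refine le_antisymm (Ordinal.log_mono_right _ le_add_self) ?_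
        exact (Ordinal.opow_le_iff_le_log Ordinal.one_lt_omega0 hb).mp hbe
      have hq1 : 1 ≤ b / omega0 ^ e :=
        Order.one_le_iff_pos.mpr ((Ordinal.div_pos hωe).mpr hbe)
      have h1 : a + omega0 ^ e = omega0 ^ e * (a / omega0 ^ e + 1) := by
        conv_lhs => rw [← Ordinal.div_add_mod a (omega0 ^ e)]
        rw [add_assoc, Ordinal.add_omega0_opow (Ordinal.mod_lt a hωe), mul_add, mul_one]
      have h2 : b / omega0 ^ e = 1 + (b / omega0 ^ e - 1) :=
        (Ordinal.add_sub_cancel_of_le hq1).symm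
      have key : a + omega0 ^ e * (b / omega0 ^ e) =
          omega0 ^ e * (a / omega0 ^ e + 1 + (b / omega0 ^ e - 1)) := by
        calc a + omega0 ^ e * (b / omega0 ^ e)
            = a + omega0 ^ e * (1 + (b / omega0 ^ e - 1)) := by rw [← h2]
          _ = a + (omega0 ^ e + omega0 ^ e * (b / omega0 ^ e - 1)) := by rw [mul_add, mul_one]
          _ = (a + omega0 ^ e) + omega0 ^ e * (b / omega0 ^ e - 1) := by rw [add_assoc]
          _ = omega0 ^ e * (a / omega0 ^ e + 1) + omega0 ^ e * (b / omega0 ^ e - 1) := by rw [h1]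
          _ = _ := by rw [← mul_add]
      have h3 : o = omega0 ^ e * (a / omega0 ^ e + 1 + (b / omega0 ^ e - 1)) + b % omega0 ^ e := by
        calc o = a + (omega0 ^ e * (b / omega0 ^ e) + b % omega0 ^ e) := by
                rw [Ordinal.div_add_mod]
          _ = (a + omega0 ^ e * (b / omega0 ^ e)) + b % omega0 ^ e := by rw [add_assoc]
          _ = _ := by rw [key]
      have hmod : o % omega0 ^ e = b % omega0 ^ e := by
        rw [h3, Ordinal.mul_add_mod_self, Ordinal.mod_eq_of_lt (Ordinal.mod_lt b hωe)]
      rw [CB_rec ho, CB_rec hb, hblog, ← he, hmod]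

private lemma CB_decomp_s3 {o : Ordinal} (ho : o ≠ 0) : ∃ m, o = m + omega0 ^ CB o := by
  induction o using Ordinal.induction with
  | h o IH =>
    set e := Ordinal.log omega0 o with he
    have hωe : (omega0 : Ordinal) ^ e ≠ 0 := Ordinal.opow_ne_zero _ Ordinal.omega0_ne_zero
    rcases eq_or_ne (o % omega0 ^ e) 0 with hr | hr
    · have hCB : CB o = e := by rw [CB_rec ho, ← he, if_pos hr]
      have hq : o = omega0 ^ e * (o / omega0 ^ e) := by
        conv_lhs => rw [← Ordinal.div_add_mod o (omega0 ^ e)]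
        rw [hr, add_zero]
      have hqω : o / omega0 ^ e < omega0 := by
        have := Ordinal.div_opow_log_lt o Ordinal.one_lt_omega0
        rwa [← he] at this
      obtain ⟨n, hn⟩ := Ordinal.lt_omega0.mp hqω
      have hn0 : n ≠ 0 := by
        rintro rfl
        exact ho (by rw [hq, hn]; simp)
      obtain ⟨k, rfl⟩ := Nat.exists_eq_succ_of_ne_zero hn0
      refine ⟨omega0 ^ e * k, ?_⟩
      rw [hCB, hq, hn]
      push_cast
      rw [mul_add, mul_one]
    · have hrlt : o % omega0 ^ e < o :=
        lt_of_lt_of_le (Ordinal.mod_lt o hωe) (Ordinal.opow_log_le_self _ ho)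
      have hCB : CB o = CB (o % omega0 ^ e) := by rw [CB_rec ho, ← he, if_neg hr]
      obtain ⟨m', hm'⟩ := IH _ hrlt hr
      refine ⟨omega0 ^ e * (o / omega0 ^ e) + m', ?_⟩
      rw [hCB, add_assoc, ← hm', Ordinal.div_add_mod]

private lemma key_step {γ : Ordinal} {X : Set Ordinal} (f : X ≃o (Set.Iio γ))
    (hf' : Continuous f.symm) {β β' : Ordinal} (hββ' : β < β')
    (y : X) (hy : CB (f y : Ordinal) = β') :
    ∃ x : X, CB ((f x : Ordinal)) = β ∧ CB (x : Ordinal) < CB (y : Ordinal) := by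
  set Y : Ordinal := (f y : Ordinal) with hYdef
  have hβ'0 : β' ≠ 0 := fun h => (h ▸ hββ').not_ge zero_le
  have hY0 : Y ≠ 0 := fun h => hβ'0 (by rw [← hy, h, CB_zero])
  obtain ⟨mY, hmY⟩ := CB_decomp_s3 hY0
  rw [hy] at hmY
  have hωβ : (omega0 : Ordinal) ^ β < omega0 ^ β' :=
    (Ordinal.opow_lt_opow_iff_right Ordinal.one_lt_omega0).mpr hββ'
  -- all z_u = u + ω^β for u < Y stay below Y
  have hzu : ∀ u < Y, u + omega0 ^ β < Y := by
    intro u hu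
    rcases le_or_gt u mY with h | h
    · calc u + omega0 ^ β ≤ mY + omega0 ^ β := add_le_add_left h _
        _ < mY + omega0 ^ β' := (add_lt_add_iff_left mY).mpr hωβ
        _ = Y := hmY.symm
    · have hu' : u - mY < omega0 ^ β' := by
        have := Ordinal.add_sub_cancel_of_le h.le
        rw [hmY] at hu
        exact (add_lt_add_iff_left mY).mp (by rwa [this])
      have : u + omega0 ^ β = mY + ((u - mY) + omega0 ^ β) := by
        rw [← add_assoc, Ordinal.add_sub_cancel_of_le h.le]
      rw [this, hmY]
      exact (add_lt_add_iff_left mY).mpr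
        (Ordinal.principal_add_omega0_opow β' hu' hωβ)
  -- the approximating set inside Iio γ
  set A : Set (Set.Iio γ) := {z | ∃ u < Y, (z : Ordinal) = u + omega0 ^ β} with hA
  -- Y (as an element of Iio γ) is in the closure of A
  have hYcl : (f y) ∈ closure A := by
    rw [closure_subtype]
    have himg : (Subtype.val '' A) = {z : Ordinal | ∃ u < Y, z = u + omega0 ^ β} := by
      ext z
      constructor
      · rintro ⟨z', hz', rfl⟩; exact hz'
      · rintro ⟨u, hu, rfl⟩
        exact ⟨⟨u + omega0 ^ β, lt_trans (hzu u hu) (f y).2⟩, ⟨u, hu, rfl⟩, rfl⟩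
    rw [himg]
    rw [Ordinal.mem_closure_iff_iSup]
    have hY0' : (0 : Ordinal) < Y := pos_iff_ne_zero.mpr hY0
    haveI : Nonempty Y.ToType := Ordinal.nonempty_toType_iff.mpr hY0
    refine ⟨Y.ToType, Ordinal.nonempty_toType_iff.mpr hY0,
      fun i => (((Ordinal.ToType.mk (o := Y)).symm i : Set.Iio Y) : Ordinal) + omega0 ^ β,
      fun i => ⟨_, ((Ordinal.ToType.mk (o := Y)).symm i).2, rfl⟩, ?_⟩
    apply le_antisymm
    · exact ciSup_le fun i => (hzu _ ((Ordinal.ToType.mk (o := Y)).symm i).2).le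
    · refine le_of_forall_lt fun c hc => lt_of_lt_of_le ?_
        (le_ciSup (Ordinal.bddAbove_range _) (Ordinal.ToType.mk (o := Y) ⟨c, hc⟩))
      simp only [OrderIso.symm_apply_apply]
      exact (lt_add_iff_pos_right c).mpr (Ordinal.opow_pos β Ordinal.omega0_pos)
  -- push to X via continuity of f.symm
  have hycl : (y : Ordinal) ∈ closure (Subtype.val '' (f.symm '' A)) := by
    have h1 : f.symm (f y) ∈ closure (f.symm '' A) :=
      image_closure_subset_closure_image hf' ⟨f y, hYcl, rfl⟩
    rw [OrderIso.symm_apply_apply] at h1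
    exact closure_subtype.mp h1
  set T : Set Ordinal := Subtype.val '' (f.symm '' A) with hT
  have hTprop : ∀ t ∈ T, t < (y : Ordinal) ∧
      ∃ x : X, (x : Ordinal) = t ∧ CB ((f x : Ordinal)) = β := by
    rintro t ⟨x, ⟨z, hzA, rfl⟩, rfl⟩
    obtain ⟨u, hu, huz⟩ := hzA
    have hzY : z < f y := by
      rw [← Subtype.coe_lt_coe, huz]
      exact hzu u hu
    constructor
    · exact Subtype.coe_lt_coe.mpr (by simpa using f.symm.strictMono hzY)
    · refine ⟨f.symm z, rfl, ?_⟩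
      rw [OrderIso.apply_symm_apply, huz]
      exact CB_add _ (Ordinal.opow_ne_zero _ Ordinal.omega0_ne_zero) u ▸ CB_opow β
  have hcof : ∀ δ < (y : Ordinal), ∃ t ∈ T, δ < t := by
    intro δ hδ
    obtain ⟨t, ht1, ht2⟩ := (_root_.mem_closure_iff.mp hycl) (Set.Ioi δ) isOpen_Ioi hδ
    exact ⟨t, ht2, ht1⟩
  -- y is not 0
  have hy0 : (y : Ordinal) ≠ 0 := by
    have hTne : T.Nonempty := by
      refine ⟨_, ⟨f.symm ⟨0 + omega0 ^ β, lt_trans (hzu 0 (pos_iff_ne_zero.mpr hY0)) (f y).2⟩,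
        ⟨⟨_, _⟩, ⟨0, pos_iff_ne_zero.mpr hY0, rfl⟩, rfl⟩, rfl⟩⟩
    obtain ⟨t, htT⟩ := hTne
    have := (hTprop t htT).1
    exact fun h => (h ▸ this).not_ge zero_le
  -- CB y ≠ 0
  have hCBy0 : CB (y : Ordinal) ≠ 0 := by
    intro h
    obtain ⟨m, hm⟩ := CB_decomp_s3 hy0
    rw [h, Ordinal.opow_zero] at hm
    have hmy : m < (y : Ordinal) := by rw [hm]; exact lt_add_of_pos_right m zero_lt_one
    obtain ⟨t, htT, hmt⟩ := hcof m hmy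
    have htly := (hTprop t htT).1
    rw [hm, Ordinal.add_one_eq_succ, Order.lt_succ_iff] at htly
    exact absurd hmt (not_lt.mpr htly)
  obtain ⟨mX, hmX⟩ := CB_decomp_s3 hy0
  have hmXy : mX < (y : Ordinal) := by
    rw [hmX]
    exact (lt_add_iff_pos_right mX).mpr (Ordinal.opow_pos _ Ordinal.omega0_pos)
  obtain ⟨t, htT, hmt⟩ := hcof mX hmXy
  obtain ⟨htly, x, hxt, hfx⟩ := hTprop t htT
  refine ⟨x, hfx, ?_⟩
  rw [hxt]
  have hw0 : t - mX ≠ 0 := by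
    intro h
    have := Ordinal.add_sub_cancel_of_le hmt.le
    rw [h, add_zero] at this
    exact hmt.ne' this.symm  -- mX + 0 = t means mX = t
  have hwlt : t - mX < omega0 ^ CB (y : Ordinal) := by
    have h1 : mX + (t - mX) < mX + omega0 ^ CB (y : Ordinal) := by
      rw [Ordinal.add_sub_cancel_of_le hmt.le, ← hmX]; exact htly
    exact (add_lt_add_iff_left mX).mp h1
  calc CB t = CB (t - mX) := by
        conv_lhs => rw [← Ordinal.add_sub_cancel_of_le hmt.le]
        exact CB_add _ hw0 mX
    _ ≤ Ordinal.log omega0 (t - mX) := CB_le_log_s3 _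
    _ < CB (y : Ordinal) := (Ordinal.lt_opow_iff_log_lt Ordinal.one_lt_omega0 hw0).mp hwlt

/-- If `1 ≤ α ≤ θ < ω₁` and `X ⊆ ω^θ` is a closed copy of `ω^α`, then the order
type of `CB '' X` is at least `α` (expressed by an order embedding of `Iio α`
into `CB '' X`). -/
theorem stmt_3 (α θ : Ordinal) (h1 : 1 ≤ α) (h2 : α ≤ θ) (h3 : θ < omega1)
    (X : Set Ordinal) (hX : X ⊆ Set.Iio (Ordinal.omega0 ^ θ))
    (hcopy : IsClosedCopy X (Ordinal.omega0 ^ α)) :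
    Nonempty (Set.Iio α ↪o (CB '' X)) := by
  obtain ⟨f, hf, hf'⟩ := hcopy
  set S : Ordinal → Set Ordinal :=
    fun β => {c | ∃ x : X, CB ((f x : Ordinal)) = β ∧ CB (x : Ordinal) = c} with hS
  have hne : ∀ β < α, (S β).Nonempty := by
    intro β hβ
    have hωβ : omega0 ^ β < omega0 ^ α :=
      (Ordinal.opow_lt_opow_iff_right Ordinal.one_lt_omega0).mpr hβ
    refine ⟨CB ((f.symm ⟨omega0 ^ β, hωβ⟩ : X) : Ordinal), f.symm ⟨omega0 ^ β, hωβ⟩, ?_, rfl⟩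
    rw [OrderIso.apply_symm_apply]
    exact CB_opow β
  have hmem : ∀ β < α, sInf (S β) ∈ S β := fun β hβ => csInf_mem (hne β hβ)
  have hmono : ∀ β β' : Ordinal, β < β' → β' < α → sInf (S β) < sInf (S β') := by
    intro β β' hββ' hβ'α
    obtain ⟨y, hy1, hy2⟩ := hmem β' hβ'α
    obtain ⟨x, hx1, hx2⟩ := key_step f hf' hββ' y hy1
    exact lt_of_le_of_lt (csInf_le' ⟨x, hx1, rfl⟩) (hy2 ▸ hx2)
  have hsub : ∀ β < α, sInf (S β) ∈ CB '' X := by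
    intro β hβ
    obtain ⟨x, _, hx2⟩ := hmem β hβ
    exact ⟨(x : Ordinal), x.2, hx2⟩
  exact ⟨OrderEmbedding.ofStrictMono
    (fun b => (⟨sInf (S b.1), hsub b.1 b.2⟩ : CB '' X))
    (fun b b' h => hmono b.1 b'.1 h b'.2)⟩
end

section
/- For every integer k ≥ 3 there exists an integer m ≥ 1 such that for every coloring c of the ordered pairs of distinct elements of an m-element set with 3 colors, there is a subset S of size k such that for every x ∈ S, the set of colors {c(y,x) : y ∈ S, y ≠ x} omits at least one of the three colors. -/
open Ordinal Set

/-- Avoidance property: every 3-coloring of ordered pairs of `Fin m` admits a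
`k`-element subset `S` such that every `x ∈ S` has its incoming edges from `S`
avoiding some color. -/
def AvoidProp (m k : ℕ) : Prop :=
  ∀ c : Fin m → Fin m → Fin 3,
    ∃ S : Finset (Fin m), S.card = k ∧
      ∀ x ∈ S, ∃ i : Fin 3, ∀ y ∈ S, y ≠ x → c y x ≠ i

/-- `A₃(k)`: the least `m ≥ 1` with the avoidance property. -/
noncomputable def A3 (k : ℕ) : ℕ := sInf {m | 1 ≤ m ∧ AvoidProp m k}

/-- Every 3-coloring of unordered pairs of `Fin m` has a monochromatic
`k`-element subset. -/
def Ramsey3Prop (m k : ℕ) : Prop :=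
  ∀ c : Sym2 (Fin m) → Fin 3,
    ∃ S : Finset (Fin m), S.card = k ∧
      ∃ i : Fin 3, ∀ x ∈ S, ∀ y ∈ S, x ≠ y → c s(x, y) = i

/-- The classical 3-color Ramsey number `R(k,k,k)`. -/
noncomputable def R3 (k : ℕ) : ℕ := sInf {m | Ramsey3Prop m k}

/-- Every 2-coloring of unordered pairs of `Fin m` has a `0`-monochromatic
`a`-subset or a `1`-monochromatic `b`-subset. -/
def Ramsey2Prop (m a b : ℕ) : Prop :=
  ∀ c : Sym2 (Fin m) → Fin 2,
    (∃ S : Finset (Fin m), S.card = a ∧ ∀ x ∈ S, ∀ y ∈ S, x ≠ y → c s(x, y) = 0) ∨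
    (∃ S : Finset (Fin m), S.card = b ∧ ∀ x ∈ S, ∀ y ∈ S, x ≠ y → c s(x, y) = 1)

/-- The classical 2-color Ramsey number `R(a,b)`. -/
noncomputable def R2 (a b : ℕ) : ℕ := sInf {m | Ramsey2Prop m a b}

/-- Every 2-coloring of the edges of the complete directed graph on `m` vertices
contains a red complete directed subgraph on `n` vertices or a blue transitive
tournament on 3 vertices. -/
def DirRamseyProp (m n : ℕ) : Prop :=
  ∀ c : Fin m → Fin m → Fin 2,
    (∃ S : Finset (Fin m), S.card = n ∧ ∀ x ∈ S, ∀ y ∈ S, x ≠ y → c x y = 0) ∨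
    (∃ x y z : Fin m, x ≠ y ∧ y ≠ z ∧ x ≠ z ∧ c x y = 1 ∧ c y z = 1 ∧ c x z = 1)

/-- The Ramsey number `R(K_n^*, L₃)`. -/
noncomputable def RKL3 (n : ℕ) : ℕ := sInf {m | DirRamseyProp m n}

theorem my_ramsey {κ : Type} [Fintype κ] [DecidableEq κ] [Nonempty κ] (k : κ → ℕ) :
    ∃ m : ℕ, ∀ (V : Finset ℕ), m ≤ V.card → ∀ c : ℕ → ℕ → κ,
      ∃ S : Finset ℕ, S ⊆ V ∧ ∃ i, S.card = k i ∧
        ∀ x ∈ S, ∀ y ∈ S, x < y → c x y = i := by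
  generalize hn : (∑ i, k i) = n
  induction n using Nat.strong_induction_on generalizing k with
  | _ n IH =>
  by_cases h0 : ∃ i, k i = 0
  · obtain ⟨i, hi⟩ := h0
    exact ⟨0, fun V _ c => ⟨∅, Finset.empty_subset _, i, by simp [hi], by simp⟩⟩
  · push_neg at h0
    have hpos : ∀ i, 1 ≤ k i := fun i => Nat.one_le_iff_ne_zero.mpr (h0 i)
    have hIH : ∀ j : κ, ∃ m : ℕ, ∀ (V : Finset ℕ), m ≤ V.card → ∀ c : ℕ → ℕ → κ,
        ∃ S : Finset ℕ, S ⊆ V ∧ ∃ i, S.card = Function.update k j (k j - 1) i ∧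
          ∀ x ∈ S, ∀ y ∈ S, x < y → c x y = i := by
      intro j
      refine IH (∑ i, Function.update k j (k j - 1) i) ?_ _ rfl
      subst hn
      refine Finset.sum_lt_sum (fun i _ => ?_) ⟨j, Finset.mem_univ j, ?_⟩
      · by_cases hij : i = j
        · subst hij; simp
        · simp [Function.update_of_ne hij]
      · have := hpos j
        simp only [Function.update_self]
        omega
    choose mj hmj using hIH
    refine ⟨1 + ∑ j, mj j, fun V hV c => ?_⟩
    have hne : V.Nonempty := Finset.card_pos.mp (by omega)
    set v := V.min' hne with hv
    have hvV : v ∈ V := V.min'_mem hne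
    set V' := V.erase v with hV'
    have hV'card : ∑ j, mj j ≤ V'.card := by
      have h2 : V'.card = V.card - 1 := by
        rw [hV']; exact Finset.card_erase_of_mem hvV
      omega
    have hfib : V'.card = ∑ j, (V'.filter fun y => c v y = j).card :=
      Finset.card_eq_sum_card_fiberwise (fun x _ => Finset.mem_univ _)
    have hpig : ∃ j, mj j ≤ (V'.filter fun y => c v y = j).card := by
      by_contra hcon
      push_neg at hcon
      have : ∑ j, (V'.filter fun y => c v y = j).card < ∑ j, mj j :=
        Finset.sum_lt_sum_of_nonempty Finset.univ_nonempty fun j _ => hcon j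
      omega
    obtain ⟨j, hj⟩ := hpig
    obtain ⟨S, hSsub, i, hScard, hShom⟩ := hmj j _ hj c
    have hSV' : S ⊆ V' := hSsub.trans (Finset.filter_subset _ _)
    by_cases hij : i = j
    · subst hij
      have hvS : v ∉ S := fun h => (Finset.mem_erase.mp (hSV' h)).1 rfl
      refine ⟨insert v S, ?_, i, ?_, ?_⟩
      · exact Finset.insert_subset hvV (hSV'.trans (Finset.erase_subset _ _))
      · rw [Finset.card_insert_of_notMem hvS, hScard, Function.update_self]
        have := hpos i; omega
      · intro x hx y hy hxy
        rcases Finset.mem_insert.mp hx with hx | hx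
        · rcases Finset.mem_insert.mp hy with hy | hy
          · omega
          · subst hx
            exact (Finset.mem_filter.mp (hSsub hy)).2
        · rcases Finset.mem_insert.mp hy with hy | hy
          · exfalso
            have : v ≤ x := V.min'_le x ((Finset.erase_subset _ _) (hSV' hx))
            omega
          · exact hShom x hx y hy hxy
    · refine ⟨S, hSV'.trans (Finset.erase_subset _ _), i, ?_, hShom⟩
      rwa [Function.update_of_ne hij] at hScard

theorem stmt_aux (m₀ : ℕ)
    (hm₀ : ∀ (V : Finset ℕ), m₀ ≤ V.card → ∀ c : ℕ → ℕ → Fin 3 × Fin 3,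
      ∃ S : Finset ℕ, S ⊆ V ∧ ∃ i, S.card = k ∧
        ∀ x ∈ S, ∀ y ∈ S, x < y → c x y = i)
    (m : ℕ) (hm : m₀ ≤ m) :
    ∀ c : Fin m → Fin m → Fin 3,
      ∃ S : Finset (Fin m), S.card = k ∧
        ∀ x ∈ S, ∃ i : Fin 3, ∀ y ∈ S, y ≠ x → c y x ≠ i := by
  intro c
  set d : ℕ → ℕ → Fin 3 × Fin 3 := fun x y =>
    if h : x < m ∧ y < m then (c ⟨x, h.1⟩ ⟨y, h.2⟩, c ⟨y, h.2⟩ ⟨x, h.1⟩) else (0, 0)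
    with hd
  obtain ⟨S, hSsub, ⟨a, b⟩, hScard, hhom⟩ :=
    hm₀ (Finset.range m) (by rwa [Finset.card_range]) d
  have hlt : ∀ x ∈ S, x < m := fun x hx => Finset.mem_range.mp (hSsub hx)
  refine ⟨S.attachFin hlt, by rw [Finset.card_attachFin, hScard], ?_⟩
  intro x hx
  obtain ⟨i, hia, hib⟩ : ∃ i : Fin 3, i ≠ a ∧ i ≠ b := by
    fin_cases a <;> fin_cases b <;> decide
  refine ⟨i, fun y hy hyx => ?_⟩
  have hxS : (x : ℕ) ∈ S := (Finset.mem_attachFin hlt).mp hx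
  have hyS : (y : ℕ) ∈ S := (Finset.mem_attachFin hlt).mp hy
  have hne : (y : ℕ) ≠ (x : ℕ) := fun h => hyx (Fin.ext h)
  rcases lt_or_gt_of_ne hne with h | h
  · have h2 := hhom _ hyS _ hxS h
    rw [hd] at h2
    simp only [dif_pos (show (y:ℕ) < m ∧ (x:ℕ) < m from ⟨y.isLt, x.isLt⟩),
      Fin.eta, Prod.mk.injEq] at h2
    rw [h2.1]
    exact Ne.symm hia
  · have h2 := hhom _ hxS _ hyS h
    rw [hd] at h2
    simp only [dif_pos (show (x:ℕ) < m ∧ (y:ℕ) < m from ⟨x.isLt, y.isLt⟩),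
      Fin.eta, Prod.mk.injEq] at h2
    rw [h2.2]
    exact Ne.symm hib

/-- For every `k ≥ 3` there is `m ≥ 1` such that every 3-coloring of ordered
pairs of distinct elements of an `m`-element set admits a `k`-subset `S` in
which every vertex's incoming edges from `S` avoid at least one color. -/
theorem stmt_6 (k : ℕ) (hk : 3 ≤ k) :
    ∃ m : ℕ, 1 ≤ m ∧
      ∀ c : Fin m → Fin m → Fin 3,
        ∃ S : Finset (Fin m), S.card = k ∧
          ∀ x ∈ S, ∃ i : Fin 3, ∀ y ∈ S, y ≠ x → c y x ≠ i := by
  obtain ⟨m₀, hm₀⟩ := my_ramsey (κ := Fin 3 × Fin 3) (fun _ => k)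
  exact ⟨max m₀ 1, le_max_right _ _, stmt_aux m₀ hm₀ _ (le_max_left _ _)⟩
end

section
/- ω^4 ↛_cl (ω·2 + 1, 3)²: there exists a coloring c : [ω^4]² → {0,1} such that no 3-element subset of ω^4 is homogeneous in color 1 and no subset of ω^4 order-homeomorphic to ω·2 + 1 is homogeneous in color 0. -/
open Ordinal Set

namespace Stmt9

noncomputable section

abbrev W : Ordinal := Ordinal.omega0
abbrev W2 : Ordinal := W * W
abbrev W3 : Ordinal := W2 * W
abbrev W4 : Ordinal := W3 * W

def pa (o : Ordinal) : Ordinal := o / W3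
def pb (o : Ordinal) : Ordinal := o % W3 / W2
def pc (o : Ordinal) : Ordinal := o % W2 / W
def pd (o : Ordinal) : Ordinal := o % W

lemma W_ne : (W : Ordinal) ≠ 0 := Ordinal.omega0_ne_zero
lemma W2_ne : (W2 : Ordinal) ≠ 0 := _root_.mul_ne_zero W_ne W_ne
lemma W3_ne : (W3 : Ordinal) ≠ 0 := _root_.mul_ne_zero W2_ne W_ne

lemma W_dvd_W2 : (W:Ordinal) ∣ W2 := ⟨W, rfl⟩
lemma W2_dvd_W3 : (W2:Ordinal) ∣ W3 := ⟨W, rfl⟩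
lemma W_dvd_W3 : (W:Ordinal) ∣ W3 := W_dvd_W2.trans W2_dvd_W3

lemma pd_lt (o : Ordinal) : pd o < W := Ordinal.mod_lt o W_ne

lemma mod_W2_lt (o : Ordinal) : o % W2 < W2 := Ordinal.mod_lt o W2_ne
lemma mod_W3_lt (o : Ordinal) : o % W3 < W3 := Ordinal.mod_lt o W3_ne

lemma pc_lt (o : Ordinal) : pc o < W := by
  rw [pc, Ordinal.div_lt W_ne]
  exact mod_W2_lt o

lemma pb_lt (o : Ordinal) : pb o < W := by
  rw [pb, Ordinal.div_lt W2_ne]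
  exact mod_W3_lt o

lemma pa_lt {o : Ordinal} (h : o < W4) : pa o < W := by
  rw [pa, Ordinal.div_lt W3_ne]; exact h

/-- reconstruction -/
lemma decomp (o : Ordinal) : W3 * pa o + (W2 * pb o + (W * pc o + pd o)) = o := by
  have h1 : W3 * (o / W3) + o % W3 = o := Ordinal.div_add_mod o W3
  have h2 : W2 * (o % W3 / W2) + o % W3 % W2 = o % W3 := Ordinal.div_add_mod _ W2
  have h3 : W * (o % W2 / W) + o % W2 % W = o % W2 := Ordinal.div_add_mod _ W
  have e1 : o % W3 % W2 = o % W2 := Ordinal.mod_mod_of_dvd o W2_dvd_W3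
  have e2 : o % W2 % W = o % W := Ordinal.mod_mod_of_dvd o W_dvd_W2
  rw [pa, pb, pc, pd]
  conv_lhs => rw [← e2]
  rw [h3, ← e1, h2, h1]

/-- canonical builder -/
def mk (α β γ δ : Ordinal) : Ordinal := W3 * α + (W2 * β + (W * γ + δ))

lemma decomp' (o : Ordinal) : mk (pa o) (pb o) (pc o) (pd o) = o := decomp o

lemma low2_lt {γ δ : Ordinal} (hγ : γ < W) (hδ : δ < W) : W * γ + δ < W2 := by
  calc W * γ + δ < W * γ + W := by exact add_lt_add_right hδ _
    _ = W * (γ + 1) := by rw [mul_add, mul_one]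
    _ ≤ W * W := by
        apply mul_le_mul_right
        rw [Ordinal.add_one_eq_succ, Order.succ_le_iff]; exact hγ

lemma low3_lt {β γ δ : Ordinal} (hβ : β < W) (hγ : γ < W) (hδ : δ < W) :
    W2 * β + (W * γ + δ) < W3 := by
  calc W2 * β + (W * γ + δ) < W2 * β + W2 := add_lt_add_right (low2_lt hγ hδ) _
    _ = W2 * (β + 1) := by rw [mul_add, mul_one]
    _ ≤ W2 * W := by
        apply mul_le_mul_right
        rw [Ordinal.add_one_eq_succ, Order.succ_le_iff]; exact hβ

lemma mk_lt_W4 {α β γ δ : Ordinal} (hα : α < W) (hβ : β < W) (hγ : γ < W) (hδ : δ < W) :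
    mk α β γ δ < W4 := by
  rw [mk]
  calc W3 * α + (W2 * β + (W * γ + δ)) < W3 * α + W3 := add_lt_add_right (low3_lt hβ hγ hδ) _
    _ = W3 * (α + 1) := by rw [mul_add, mul_one]
    _ ≤ W3 * W := by
        apply mul_le_mul_right
        rw [Ordinal.add_one_eq_succ, Order.succ_le_iff]; exact hα

lemma mod_eq_of_lt {a b : Ordinal} (h : a < b) : a % b = a := by
  rw [Ordinal.mod_def, Ordinal.div_eq_zero_of_lt h, mul_zero, Ordinal.sub_zero]

lemma mk_pa {α β γ δ : Ordinal} (hβ : β < W) (hγ : γ < W) (hδ : δ < W) :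
    pa (mk α β γ δ) = α := by
  rw [pa, mk, Ordinal.mul_add_div _ W3_ne, Ordinal.div_eq_zero_of_lt (low3_lt hβ hγ hδ), add_zero]

lemma mk_mod3 {α β γ δ : Ordinal} (hβ : β < W) (hγ : γ < W) (hδ : δ < W) :
    (mk α β γ δ) % W3 = W2 * β + (W * γ + δ) := by
  rw [mk, Ordinal.mul_add_mod_self, mod_eq_of_lt (low3_lt hβ hγ hδ)]

lemma mk_pb {α β γ δ : Ordinal} (hβ : β < W) (hγ : γ < W) (hδ : δ < W) :
    pb (mk α β γ δ) = β := by
  rw [pb, mk_mod3 hβ hγ hδ, Ordinal.mul_add_div _ W2_ne,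
    Ordinal.div_eq_zero_of_lt (low2_lt hγ hδ), add_zero]

lemma mk_mod2 {α β γ δ : Ordinal} (hβ : β < W) (hγ : γ < W) (hδ : δ < W) :
    (mk α β γ δ) % W2 = W * γ + δ := by
  have : (mk α β γ δ) % W2 = (mk α β γ δ) % W3 % W2 :=
    (Ordinal.mod_mod_of_dvd _ W2_dvd_W3).symm
  rw [this, mk_mod3 hβ hγ hδ, Ordinal.mul_add_mod_self, mod_eq_of_lt (low2_lt hγ hδ)]

lemma mk_pc {α β γ δ : Ordinal} (hβ : β < W) (hγ : γ < W) (hδ : δ < W) :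
    pc (mk α β γ δ) = γ := by
  rw [pc, mk_mod2 hβ hγ hδ, Ordinal.mul_add_div _ W_ne,
    Ordinal.div_eq_zero_of_lt hδ, add_zero]

lemma mk_pd {α β γ δ : Ordinal} (hβ : β < W) (hγ : γ < W) (hδ : δ < W) :
    pd (mk α β γ δ) = δ := by
  have : (mk α β γ δ) % W = (mk α β γ δ) % W2 % W :=
    (Ordinal.mod_mod_of_dvd _ W_dvd_W2).symm
  rw [pd, this, mk_mod2 hβ hγ hδ, Ordinal.mul_add_mod_self, mod_eq_of_lt hδ]

/-- lexicographic consequence of < -/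
lemma lex_of_lt {x y : Ordinal} (h : x < y) :
    pa x < pa y ∨ (pa x = pa y ∧ (pb x < pb y ∨ (pb x = pb y ∧
      (pc x < pc y ∨ (pc x = pc y ∧ pd x < pd y))))) := by
  have ha : pa x ≤ pa y := Ordinal.div_le_left h.le W3
  rcases lt_or_eq_of_le ha with ha' | ha'
  · exact Or.inl ha'
  right; refine ⟨ha', ?_⟩
  -- x % W3 < y % W3
  have h3 : x % W3 < y % W3 := by
    have dx := Ordinal.div_add_mod x W3
    have dy := Ordinal.div_add_mod y W3
    have : W3 * (x / W3) + x % W3 < W3 * (x / W3) + y % W3 := by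
      rw [dx]
      calc x < y := h
        _ = W3 * (y / W3) + y % W3 := dy.symm
        _ = W3 * (x / W3) + y % W3 := by
            have ha2 : x / W3 = y / W3 := ha'
            rw [ha2]
    exact (add_lt_add_iff_left _).mp this
  have hb : pb x ≤ pb y := Ordinal.div_le_left h3.le W2
  rcases lt_or_eq_of_le hb with hb' | hb'
  · exact Or.inl hb'
  right; refine ⟨hb', ?_⟩
  have h2 : x % W2 < y % W2 := by
    have e1 : x % W3 % W2 = x % W2 := Ordinal.mod_mod_of_dvd x W2_dvd_W3
    have e2 : y % W3 % W2 = y % W2 := Ordinal.mod_mod_of_dvd y W2_dvd_W3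
    have dx := Ordinal.div_add_mod (x % W3) W2
    have dy := Ordinal.div_add_mod (y % W3) W2
    rw [e1] at dx; rw [e2] at dy
    have : W2 * (x % W3 / W2) + x % W2 < W2 * (x % W3 / W2) + y % W2 := by
      rw [dx]
      calc x % W3 < y % W3 := h3
        _ = W2 * (y % W3 / W2) + y % W2 := dy.symm
        _ = W2 * (x % W3 / W2) + y % W2 := by
            have : y % W3 / W2 = x % W3 / W2 := hb'.symm
            rw [this]
    exact (add_lt_add_iff_left _).mp this
  have hc : pc x ≤ pc y := Ordinal.div_le_left h2.le W
  rcases lt_or_eq_of_le hc with hc' | hc'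
  · exact Or.inl hc'
  right; refine ⟨hc', ?_⟩
  have h1 : x % W < y % W := by
    have e1 : x % W2 % W = x % W := Ordinal.mod_mod_of_dvd x W_dvd_W2
    have e2 : y % W2 % W = y % W := Ordinal.mod_mod_of_dvd y W_dvd_W2
    have dx := Ordinal.div_add_mod (x % W2) W
    have dy := Ordinal.div_add_mod (y % W2) W
    rw [e1] at dx; rw [e2] at dy
    have : W * (x % W2 / W) + x % W < W * (x % W2 / W) + y % W := by
      rw [dx]
      calc x % W2 < y % W2 := h2
        _ = W * (y % W2 / W) + y % W := dy.symm
        _ = W * (x % W2 / W) + y % W := by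
            have : y % W2 / W = x % W2 / W := hc'.symm
            rw [this]
    exact (add_lt_add_iff_left _).mp this
  exact h1

/-- equal coordinates → equal -/
lemma eq_of_coords {x y : Ordinal} (h1 : pa x = pa y) (h2 : pb x = pb y)
    (h3 : pc x = pc y) (h4 : pd x = pd y) : x = y := by
  have hx := (decomp' x).symm
  rw [h1, h2, h3, h4, decomp' y] at hx
  exact hx

/-- lex implies < -/
lemma lt_of_lex {x y : Ordinal}
    (h : pa x < pa y ∨ (pa x = pa y ∧ (pb x < pb y ∨ (pb x = pb y ∧
      (pc x < pc y ∨ (pc x = pc y ∧ pd x < pd y)))))) : x < y := by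
  rcases lt_trichotomy x y with h' | h' | h'
  · exact h'
  · subst h'
    rcases h with h | ⟨_, h | ⟨_, h | ⟨_, h⟩⟩⟩ <;> exact absurd h (lt_irrefl _)
  · exfalso
    have L := lex_of_lt h'
    rcases h with h | ⟨e1, h | ⟨e2, h | ⟨e3, h⟩⟩⟩ <;>
      rcases L with L | ⟨f1, L | ⟨f2, L | ⟨f3, L⟩⟩⟩ <;>
      first
        | exact absurd (h.trans L) (lt_irrefl _)
        | simp_all

-- appended to s1 content for testing
def nn (o : Ordinal) : ℕ := if h : o < W then Classical.choose (Ordinal.lt_omega0.mp h) else 0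

lemma nn_spec {o : Ordinal} (h : o < W) : o = (nn o : Ordinal) := by
  rw [nn, dif_pos h]; exact Classical.choose_spec (Ordinal.lt_omega0.mp h)

def na (x : Ordinal) : ℕ := nn (pa x)
def nb (x : Ordinal) : ℕ := nn (pb x)
def nc (x : Ordinal) : ℕ := nn (pc x)
def nd (x : Ordinal) : ℕ := nn (pd x)

lemma pa_eq {x : Ordinal} (h : x < W4) : pa x = (na x : Ordinal) := nn_spec (pa_lt h)
lemma pb_eq (x : Ordinal) : pb x = (nb x : Ordinal) := nn_spec (pb_lt x)
lemma pc_eq (x : Ordinal) : pc x = (nc x : Ordinal) := nn_spec (pc_lt x)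
lemma pd_eq (x : Ordinal) : pd x = (nd x : Ordinal) := nn_spec (pd_lt x)

/-- The coloring rules, in terms of natural-number coordinates. -/
def Blue (x y : Ordinal) : Prop :=
  -- R01
  (nc x < nd x ∧ na y = na x ∧ nb y = nb x ∧ nc y = nc x + 1 ∧ nd y = 0) ∨
  -- R02
  (nd x ≠ 0 ∧ nd x ≤ nc x ∧ nb x < nc x ∧
    na y = na x ∧ nb y = nb x + 1 ∧ nc y = 0 ∧ nd y = 0) ∨
  -- K03
  (nd x ≠ 0 ∧ (nd x ≤ nc x ∨ nc x < nb x) ∧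
    na y = na x + 1 ∧ nb y = 0 ∧ nc y = 0 ∧ nd y = 0) ∨
  -- F05
  (nc x < nd x ∧ nb x ≤ nc x ∧ na x + 2 ≤ na y ∧ nb y = 0 ∧ nc y = 0 ∧ nd y = 0) ∨
  -- F02
  (nc x < nd x ∧ nb x ≤ nc x ∧ na y = na x ∧ nb x + 2 ≤ nb y ∧ nc y = 0 ∧ nd y = 0) ∨
  -- K12
  (nd x = 0 ∧ nb x < nc x ∧ na y = na x ∧ nb y = nb x + 1 ∧ nc y = 0 ∧ nd y = 0) ∨
  -- K13
  (nd x = 0 ∧ nb x < nc x ∧ na y = na x + 1 ∧ nb y = 0 ∧ nc y = 0 ∧ nd y = 0) ∨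
  -- F13L
  (nd x = 0 ∧ nc x ≠ 0 ∧ nc x ≤ nb x ∧ na x + 2 ≤ na y ∧ nb y = 0 ∧ nc y = 0 ∧ nd y = 0) ∨
  -- D21
  (nd x = 0 ∧ nc x = 0 ∧ nb x ≠ 0 ∧ nd y = 0 ∧ nc y ≠ 0 ∧ nc y ≤ nb y) ∨
  -- J32
  (nd x = 0 ∧ nc x = 0 ∧ nb x = 0 ∧ na x ≠ 0 ∧ nd y = 0 ∧ nc y = 0 ∧ nb y ≠ 0) ∨
  -- D2
  (nd x = 0 ∧ nc x = 0 ∧ nb x ≠ 0 ∧ nd y ≠ 0 ∧ nb y ≤ nc y ∧ nb x ≤ nc y)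

lemma natlex {x y : Ordinal} (hx : x < W4) (hy : y < W4) (h : x < y) :
    na x < na y ∨ (na x = na y ∧ (nb x < nb y ∨ (nb x = nb y ∧
      (nc x < nc y ∨ (nc x = nc y ∧ nd x < nd y))))) := by
  have L := lex_of_lt h
  rw [pa_eq hx, pa_eq hy, pb_eq x, pb_eq y, pc_eq x, pc_eq y, pd_eq x, pd_eq y] at L
  simpa only [Nat.cast_lt, Nat.cast_inj] using L

theorem no_triangle {x y z : Ordinal} (hy4 : y < W4) (hz4 : z < W4)
    (hyz : y < z) (h1 : Blue x y) (h2 : Blue y z) (h3 : Blue x z) : False := by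
  have L2 := natlex hy4 hz4 hyz
  unfold Blue at h1 h2 h3
  omega

set_option maxHeartbeats 1000000

/-! ### nat-coordinate interface for building elements -/

def nmk (a b c d : ℕ) : Ordinal := mk (a : Ordinal) b c d

lemma natlex_above {a b c d : ℕ} {x : Ordinal} (hx4 : x < W4) (h : nmk a b c d < x) :
    a < na x ∨ (a = na x ∧ (b < nb x ∨ (b = nb x ∧ (c < nc x ∨ (c = nc x ∧ d < nd x))))) := by
  have L := lex_of_lt h
  rw [nmk] at L
  rw [mk_pa (Ordinal.nat_lt_omega0 b) (Ordinal.nat_lt_omega0 c) (Ordinal.nat_lt_omega0 d),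
      mk_pb (Ordinal.nat_lt_omega0 b) (Ordinal.nat_lt_omega0 c) (Ordinal.nat_lt_omega0 d),
      mk_pc (Ordinal.nat_lt_omega0 b) (Ordinal.nat_lt_omega0 c) (Ordinal.nat_lt_omega0 d),
      mk_pd (Ordinal.nat_lt_omega0 b) (Ordinal.nat_lt_omega0 c) (Ordinal.nat_lt_omega0 d),
      pa_eq hx4, pb_eq x, pc_eq x, pd_eq x] at L
  simpa only [Nat.cast_lt, Nat.cast_inj] using L

lemma nmk_lt {a b c d : ℕ} {s : Ordinal} (hs4 : s < W4)
    (h : a < na s ∨ (a = na s ∧ (b < nb s ∨ (b = nb s ∧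
      (c < nc s ∨ (c = nc s ∧ d < nd s)))))) : nmk a b c d < s := by
  apply lt_of_lex
  rw [nmk,
      mk_pa (Ordinal.nat_lt_omega0 b) (Ordinal.nat_lt_omega0 c) (Ordinal.nat_lt_omega0 d),
      mk_pb (Ordinal.nat_lt_omega0 b) (Ordinal.nat_lt_omega0 c) (Ordinal.nat_lt_omega0 d),
      mk_pc (Ordinal.nat_lt_omega0 b) (Ordinal.nat_lt_omega0 c) (Ordinal.nat_lt_omega0 d),
      mk_pd (Ordinal.nat_lt_omega0 b) (Ordinal.nat_lt_omega0 c) (Ordinal.nat_lt_omega0 d),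
      pa_eq hs4, pb_eq s, pc_eq s, pd_eq s]
  simpa only [Nat.cast_lt, Nat.cast_inj] using h

lemma coords_zero {x : Ordinal} (hx4 : x < W4) (h1 : na x = 0) (h2 : nb x = 0)
    (h3 : nc x = 0) (h4 : nd x = 0) : x = 0 := by
  have hd := decomp' x
  rw [pa_eq hx4, pb_eq x, pc_eq x, pd_eq x, h1, h2, h3, h4] at hd
  simpa [mk] using hd.symm

/-! ### Blue constructors -/
section blues
variable {x y : Ordinal}
lemma blue_R01 (h1 : nc x < nd x) (h2 : na y = na x) (h3 : nb y = nb x)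
    (h4 : nc y = nc x + 1) (h5 : nd y = 0) : Blue x y := Or.inl ⟨h1, h2, h3, h4, h5⟩
lemma blue_R02 (h1 : nd x ≠ 0) (h2 : nd x ≤ nc x) (h3 : nb x < nc x) (h4 : na y = na x)
    (h5 : nb y = nb x + 1) (h6 : nc y = 0) (h7 : nd y = 0) : Blue x y :=
  Or.inr (Or.inl ⟨h1, h2, h3, h4, h5, h6, h7⟩)
lemma blue_K03 (h1 : nd x ≠ 0) (h2 : nd x ≤ nc x ∨ nc x < nb x) (h3 : na y = na x + 1)
    (h4 : nb y = 0) (h5 : nc y = 0) (h6 : nd y = 0) : Blue x y :=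
  Or.inr (Or.inr (Or.inl ⟨h1, h2, h3, h4, h5, h6⟩))
lemma blue_F05 (h1 : nc x < nd x) (h2 : nb x ≤ nc x) (h3 : na x + 2 ≤ na y)
    (h4 : nb y = 0) (h5 : nc y = 0) (h6 : nd y = 0) : Blue x y :=
  Or.inr (Or.inr (Or.inr (Or.inl ⟨h1, h2, h3, h4, h5, h6⟩)))
lemma blue_F02 (h1 : nc x < nd x) (h2 : nb x ≤ nc x) (h3 : na y = na x)
    (h4 : nb x + 2 ≤ nb y) (h5 : nc y = 0) (h6 : nd y = 0) : Blue x y :=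
  Or.inr (Or.inr (Or.inr (Or.inr (Or.inl ⟨h1, h2, h3, h4, h5, h6⟩))))
lemma blue_K12 (h1 : nd x = 0) (h2 : nb x < nc x) (h3 : na y = na x)
    (h4 : nb y = nb x + 1) (h5 : nc y = 0) (h6 : nd y = 0) : Blue x y :=
  Or.inr (Or.inr (Or.inr (Or.inr (Or.inr (Or.inl ⟨h1, h2, h3, h4, h5, h6⟩)))))
lemma blue_K13 (h1 : nd x = 0) (h2 : nb x < nc x) (h3 : na y = na x + 1)
    (h4 : nb y = 0) (h5 : nc y = 0) (h6 : nd y = 0) : Blue x y :=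
  Or.inr (Or.inr (Or.inr (Or.inr (Or.inr (Or.inr (Or.inl ⟨h1, h2, h3, h4, h5, h6⟩))))))
lemma blue_F13L (h1 : nd x = 0) (h2 : nc x ≠ 0) (h3 : nc x ≤ nb x) (h4 : na x + 2 ≤ na y)
    (h5 : nb y = 0) (h6 : nc y = 0) (h7 : nd y = 0) : Blue x y :=
  Or.inr (Or.inr (Or.inr (Or.inr (Or.inr (Or.inr (Or.inr (Or.inl ⟨h1, h2, h3, h4, h5, h6, h7⟩)))))))
lemma blue_D21 (h1 : nd x = 0) (h2 : nc x = 0) (h3 : nb x ≠ 0) (h4 : nd y = 0)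
    (h5 : nc y ≠ 0) (h6 : nc y ≤ nb y) : Blue x y :=
  Or.inr (Or.inr (Or.inr (Or.inr (Or.inr (Or.inr (Or.inr (Or.inr (Or.inl ⟨h1, h2, h3, h4, h5, h6⟩))))))))
lemma blue_J32 (h1 : nd x = 0) (h2 : nc x = 0) (h3 : nb x = 0) (h4 : na x ≠ 0)
    (h5 : nd y = 0) (h6 : nc y = 0) (h7 : nb y ≠ 0) : Blue x y :=
  Or.inr (Or.inr (Or.inr (Or.inr (Or.inr (Or.inr (Or.inr (Or.inr (Or.inr (Or.inl ⟨h1, h2, h3, h4, h5, h6, h7⟩)))))))))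
lemma blue_D2 (h1 : nd x = 0) (h2 : nc x = 0) (h3 : nb x ≠ 0) (h4 : nd y ≠ 0)
    (h5 : nb y ≤ nc y) (h6 : nb x ≤ nc y) : Blue x y :=
  Or.inr (Or.inr (Or.inr (Or.inr (Or.inr (Or.inr (Or.inr (Or.inr (Or.inr (Or.inr ⟨h1, h2, h3, h4, h5, h6⟩)))))))))
end blues

lemma nd_limit {X : Set Ordinal} {s : Ordinal} (hs4 : s < W4)
    (cof : ∀ t < s, ∃ x ∈ X, t < x ∧ x < s) : nd s = 0 := by
  by_contra hne
  obtain ⟨m, hm⟩ := Nat.exists_eq_succ_of_ne_zero hne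
  have ht : nmk (na s) (nb s) (nc s) m < s := nmk_lt hs4 (by omega)
  obtain ⟨x, hxX, htx, hxs⟩ := cof _ ht
  have hx4 : x < W4 := hxs.trans hs4
  have A := natlex_above hx4 htx
  have B := natlex hx4 hs4 hxs
  omega

/-- rank-1 limits are killed immediately -/
lemma kill1 {X : Set Ordinal} {s : Ordinal} (hs4 : s < W4) (hsX : s ∈ X)
    (hds : nd s = 0) (hcs : nc s ≠ 0)
    (cof : ∀ t < s, ∃ x ∈ X, t < x ∧ x < s)
    (red : ∀ x ∈ X, ∀ y ∈ X, x < y → ¬ Blue x y) : False := by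
  obtain ⟨m, hm⟩ := Nat.exists_eq_succ_of_ne_zero hcs
  have ht : nmk (na s) (nb s) m m < s := nmk_lt hs4 (by omega)
  obtain ⟨b, hbX, htb, hbs⟩ := cof _ ht
  have hb4 : b < W4 := hbs.trans hs4
  have A := natlex_above hb4 htb
  have B := natlex hb4 hs4 hbs
  obtain ⟨e1, e2, e3, e4⟩ : na b = na s ∧ nb b = nb s ∧ nc b = m ∧ m < nd b := by omega
  exact red b hbX s hsX hbs (blue_R01 (by omega) (by omega) (by omega) (by omega) hds)

theorem kill {X : Set Ordinal} (hX : X ⊆ Iio W4) {p q : Ordinal}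
    (hpX : p ∈ X) (hqX : q ∈ X) (hp0 : 0 < p) (hpq : p < q)
    (cofp : ∀ t < p, ∃ x ∈ X, t < x ∧ x < p)
    (cofq : ∀ t < q, ∃ x ∈ X, t < x ∧ x < q ∧ p < x)
    (red : ∀ x ∈ X, ∀ y ∈ X, x < y → ¬ Blue x y) : False := by
  have p4 : p < W4 := hX hpX
  have q4 : q < W4 := hX hqX
  have cofq' : ∀ t < q, ∃ x ∈ X, t < x ∧ x < q := by
    intro t ht; obtain ⟨x, h1, h2, h3, _⟩ := cofq t ht; exact ⟨x, h1, h2, h3⟩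
  have hDp : nd p = 0 := nd_limit p4 cofp
  have hDq : nd q = 0 := nd_limit q4 cofq'
  have Lpq := natlex p4 q4 hpq
  by_cases hCp : nc p ≠ 0
  · exact kill1 p4 hpX hDp hCp cofp red
  by_cases hCq : nc q ≠ 0
  · exact kill1 q4 hqX hDq hCq cofq' red
  push_neg at hCp hCq
  have hq0 : q ≠ 0 := fun h => absurd (h ▸ (hp0.trans hpq)) (lt_irrefl 0)
  have hp0' : p ≠ 0 := hp0.ne'
  by_cases hBq : nb q ≠ 0
  · -- q has rank 2
    by_cases hBp : nb p = 0
    · -- p rank 3 : J32 (p,q)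
      have hAp : na p ≠ 0 := fun h => hp0' (coords_zero p4 h hBp hCp hDp)
      exact red p hpX q hqX hpq (blue_J32 hDp hCp hBp hAp hDq hCq hBq)
    · -- p rank 2
      obtain ⟨m, hm⟩ := Nat.exists_eq_succ_of_ne_zero hBp
      have ht : nmk (na p) m (nb q + m + 2) 0 < p := nmk_lt p4 (by omega)
      obtain ⟨a, haX, hta, hap⟩ := cofp _ ht
      have a4 : a < W4 := hX haX
      have A1 := natlex_above a4 hta
      have A2 := natlex a4 p4 hap
      obtain ⟨e1, e2, e3⟩ : na a = na p ∧ nb a = m ∧ nb q + m + 2 ≤ nc a := by omega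
      clear A1 A2
      by_cases hda : nd a = 0
      · exact red a haX p hpX hap (blue_K12 hda (by omega) (by omega) (by omega) hCp hDp)
      by_cases hw2 : nd a ≤ nc a
      · exact red a haX p hpX hap
          (blue_R02 hda hw2 (by omega) (by omega) (by omega) hCp hDp)
      · by_cases hsame : na q = na p
        · -- F02 (a,q) ; note nb q > nb p since q > p in the same block
          have f1 : nb p < nb q := by omega
          exact red a haX q hqX (hap.trans hpq)
            (blue_F02 (by omega) (by omega) (by omega) (by omega) hCq hDq)
        · obtain ⟨m', hm'⟩ := Nat.exists_eq_succ_of_ne_zero hBq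
          have ht' : nmk (na q) m' (nb q + nb p + 2) 0 < q := nmk_lt q4 (by omega)
          obtain ⟨b, hbX, htb, hbq, hpb⟩ := cofq _ ht'
          have b4 : b < W4 := hX hbX
          have B1 := natlex_above b4 htb
          have B2 := natlex b4 q4 hbq
          obtain ⟨f1, f2, f3⟩ : na b = na q ∧ nb b = m' ∧ nb q + nb p + 2 ≤ nc b := by omega
          clear B1 B2
          by_cases hdb : nd b = 0
          · exact red b hbX q hqX hbq (blue_K12 hdb (by omega) (by omega) (by omega) hCq hDq)
          by_cases hw2b : nd b ≤ nc b
          · exact red b hbX q hqX hbq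
              (blue_R02 hdb hw2b (by omega) (by omega) (by omega) hCq hDq)
          · exact red p hpX b hbX hpb (blue_D2 hDp hCp hBp hdb (by omega) (by omega))
  · -- q rank 3
    push_neg at hBq
    have hAq : na q ≠ 0 := fun h => hq0 (coords_zero q4 h hBq hCq hDq)
    by_cases hBp : nb p ≠ 0
    · -- p rank 2, q rank 3
      obtain ⟨m, hm⟩ := Nat.exists_eq_succ_of_ne_zero hBp
      have ht : nmk (na p) m (m + 1) 0 < p := nmk_lt p4 (by omega)
      obtain ⟨a, haX, hta, hap⟩ := cofp _ ht
      have a4 : a < W4 := hX haX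
      have A1 := natlex_above a4 hta
      have A2 := natlex a4 p4 hap
      obtain ⟨e1, e2, e3⟩ : na a = na p ∧ nb a = m ∧ m + 1 ≤ nc a := by omega
      clear A1 A2
      by_cases hda : nd a = 0
      · exact red a haX p hpX hap (blue_K12 hda (by omega) (by omega) (by omega) hCp hDp)
      by_cases hw2 : nd a ≤ nc a
      · exact red a haX p hpX hap
          (blue_R02 hda hw2 (by omega) (by omega) (by omega) hCp hDp)
      by_cases hfar : na p + 2 ≤ na q
      · exact red a haX q hqX (hap.trans hpq)
          (blue_F05 (by omega) (by omega) (by omega) hBq hCq hDq)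
      · -- gap 1 : na q = na p + 1
        have hgap : na q = na p + 1 := by omega
        have ht' : nmk (na p) (m + nb p + 2) 0 0 < q := nmk_lt q4 (by omega)
        obtain ⟨b, hbX, htb, hbq, hpb⟩ := cofq _ ht'
        have b4 : b < W4 := hX hbX
        have B1 := natlex_above b4 htb
        have B2 := natlex b4 q4 hbq
        obtain ⟨f1, f2⟩ : na b = na p ∧ m + nb p + 2 ≤ nb b := by omega
        clear B1 B2
        by_cases hdb : nd b = 0
        · by_cases hcb : nc b = 0
          · exact red a haX b hbX (hap.trans hpb)
              (blue_F02 (by omega) (by omega) (by omega) (by omega) hcb hdb)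
          · by_cases hzb : nb b < nc b
            · exact red b hbX q hqX hbq (blue_K13 hdb hzb (by omega) hBq hCq hDq)
            · exact red p hpX b hbX hpb (blue_D21 hDp hCp hBp hdb hcb (by omega))
        · by_cases hwb : nc b < nd b ∧ nb b ≤ nc b
          · exact red p hpX b hbX hpb (blue_D2 hDp hCp hBp hdb (by omega) (by omega))
          · exact red b hbX q hqX hbq
              (blue_K03 hdb (by omega) (by omega) hBq hCq hDq)
    · -- p rank 3, q rank 3
      push_neg at hBp
      have hAp : na p ≠ 0 := fun h => hp0' (coords_zero p4 h hBp hCp hDp)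
      have hgap : na p < na q := by omega
      have ht : nmk (na p - 1) 0 0 0 < p := nmk_lt p4 (by omega)
      obtain ⟨a, haX, hta, hap⟩ := cofp _ ht
      have a4 : a < W4 := hX haX
      have A1 := natlex_above a4 hta
      have A2 := natlex a4 p4 hap
      obtain ⟨e1, e2⟩ : na a = na p - 1 ∧ (nb a ≠ 0 ∨ nc a ≠ 0 ∨ nd a ≠ 0) := by omega
      clear A1 A2
      by_cases hda : nd a = 0
      · by_cases hca : nc a = 0
        · -- a rank 2 ; B-side
          have hba : nb a ≠ 0 := by omega
          have ht' : nmk (na q - 1) (nb a) 0 0 < q := nmk_lt q4 (by omega)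
          obtain ⟨b, hbX, htb, hbq, hpb⟩ := cofq _ ht'
          have b4 : b < W4 := hX hbX
          have B1 := natlex_above b4 htb
          have B2 := natlex b4 q4 hbq
          obtain ⟨f1, f2⟩ : na b = na q - 1 ∧ nb a ≤ nb b := by omega
          clear B1 B2
          by_cases hdb : nd b = 0
          · by_cases hcb : nc b = 0
            · exact red p hpX b hbX hpb (blue_J32 hDp hCp hBp hAp hdb hcb (by omega))
            · by_cases hzb : nb b < nc b
              · exact red b hbX q hqX hbq (blue_K13 hdb hzb (by omega) hBq hCq hDq)
              · exact red a haX b hbX (hap.trans hpb)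
                  (blue_D21 hda hca hba hdb hcb (by omega))
          · by_cases hwb : nc b < nd b ∧ nb b ≤ nc b
            · exact red a haX b hbX (hap.trans hpb)
                (blue_D2 hda hca hba hdb (by omega) (by omega))
            · exact red b hbX q hqX hbq
                (blue_K03 hdb (by omega) (by omega) hBq hCq hDq)
        · by_cases hza : nb a < nc a
          · exact red a haX p hpX hap (blue_K13 hda hza (by omega) hBp hCp hDp)
          · exact red a haX q hqX (hap.trans hpq)
              (blue_F13L hda hca (by omega) (by omega) hBq hCq hDq)
      · by_cases hwa : nc a < nd a ∧ nb a ≤ nc a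
        · exact red a haX q hqX (hap.trans hpq)
            (blue_F05 (by omega) (by omega) (by omega) hBq hCq hDq)
        · exact red a haX p hpX hap
            (blue_K03 hda (by omega) (by omega) hBp hCp hDp)

/-! ### The coloring and the topological extraction -/

open scoped Classical in
/-- The coloring. -/
def col (x y : Ordinal) : Fin 2 := if Blue x y then 1 else 0

lemma col_eq_one {x y : Ordinal} (h : Blue x y) : col x y = 1 := by
  rw [col, if_pos h]

lemma blue_of_col {x y : Ordinal} (h : col x y = 1) : Blue x y := by
  by_contra hb
  rw [col, if_neg hb] at h
  exact absurd h (by decide)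

lemma W4_eq : Ordinal.omega0 ^ (4 : Ordinal) = W4 := by
  have : ((4 : ℕ) : Ordinal) = (4 : Ordinal) := by norm_num
  rw [← this, Ordinal.opow_natCast]
  show Ordinal.omega0 ^ (4 : ℕ) = ((W * W) * W) * W
  rw [pow_succ, pow_succ, pow_succ, pow_one]

/-- continuity gives order-cofinal approach to points of `X` -/
lemma reach {X : Set Ordinal} {T : Ordinal} (f : ↥X ≃o ↥(Set.Iio T))
    (hc : Continuous f.symm) (v : ↥(Set.Iio T)) {t : Ordinal}
    (hv0 : (0 : Ordinal) < (v : Ordinal)) (ht : t < ((f.symm v : ↥X) : Ordinal)) :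
    ∃ l < (v : Ordinal), ∀ m (hm : m < T), l < m → m ≤ (v : Ordinal) →
      t < ((f.symm ⟨m, hm⟩ : ↥X) : Ordinal) := by
  set g : ↥(Set.Iio T) → Ordinal := fun u => ((f.symm u : ↥X) : Ordinal) with hg
  have hgc : Continuous g := continuous_subtype_val.comp hc
  have hmem : g ⁻¹' (Set.Ioi t) ∈ nhds v :=
    hgc.continuousAt.preimage_mem_nhds (isOpen_Ioi.mem_nhds ht)
  rw [nhds_subtype_eq_comap, Filter.mem_comap] at hmem
  obtain ⟨V, hV, hVsub⟩ := hmem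
  obtain ⟨l, hl, hsub⟩ := exists_Ioc_subset_of_mem_nhds hV ⟨0, hv0⟩
  refine ⟨l, hl, fun m hm hlm hmv => ?_⟩
  have h1 : m ∈ V := hsub ⟨hlm, hmv⟩
  have h2 : (⟨m, hm⟩ : ↥(Set.Iio T)) ∈ Subtype.val ⁻¹' V := h1
  exact hVsub h2

theorem no_red_copy {X : Set Ordinal} (hX : X ⊆ Set.Iio W4)
    (hcc : IsClosedCopy X (Ordinal.omega0 * 2 + 1))
    (red : ∀ x ∈ X, ∀ y ∈ X, x < y → ¬ Blue x y) : False := by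
  obtain ⟨f, _, hfs⟩ := hcc
  have hw2 : (Ordinal.omega0 * 2 : Ordinal) = Ordinal.omega0 + Ordinal.omega0 := by
    rw [show (2 : Ordinal) = 1 + 1 from (one_add_one_eq_two).symm, mul_add, mul_one]
  have hlim2 : Order.IsSuccLimit (Ordinal.omega0 * 2) := by
    rw [hw2]; exact Ordinal.isSuccLimit_add _ Ordinal.isSuccLimit_omega0
  have hωω2 : Ordinal.omega0 < Ordinal.omega0 * 2 := by
    rw [hw2]
    exact lt_of_eq_of_lt (add_zero _).symm (add_lt_add_right Ordinal.omega0_pos _)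
  have hω2T : Ordinal.omega0 * 2 < Ordinal.omega0 * 2 + 1 := by
    rw [Ordinal.add_one_eq_succ]; exact Order.lt_succ _
  have hωT : Ordinal.omega0 < Ordinal.omega0 * 2 + 1 := hωω2.trans hω2T
  have h0T : (0 : Ordinal) < Ordinal.omega0 * 2 + 1 := Ordinal.omega0_pos.trans hωT
  set vp : ↥(Set.Iio (Ordinal.omega0 * 2 + 1)) := ⟨Ordinal.omega0, hωT⟩ with hvp
  set vq : ↥(Set.Iio (Ordinal.omega0 * 2 + 1)) := ⟨Ordinal.omega0 * 2, hω2T⟩ with hvq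
  set p : Ordinal := ((f.symm vp : ↥X) : Ordinal) with hp
  set q : Ordinal := ((f.symm vq : ↥X) : Ordinal) with hq
  have hpX : p ∈ X := (f.symm vp).2
  have hqX : q ∈ X := (f.symm vq).2
  have hpq : p < q := by
    rw [hp, hq]
    rw [Subtype.coe_lt_coe]
    rw [f.symm.lt_iff_lt]
    exact Subtype.mk_lt_mk.mpr hωω2
  -- p > 0
  have hp0 : 0 < p := by
    set v0 : ↥(Set.Iio (Ordinal.omega0 * 2 + 1)) := ⟨0, h0T⟩ with hv0
    have h01 : ((f.symm v0 : ↥X) : Ordinal) < p := by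
      rw [hp, Subtype.coe_lt_coe, f.symm.lt_iff_lt]
      exact Subtype.mk_lt_mk.mpr Ordinal.omega0_pos
    exact lt_of_le_of_lt zero_le h01
  -- cofinality below p
  have cofp : ∀ t < p, ∃ x ∈ X, t < x ∧ x < p := by
    intro t ht
    obtain ⟨l, hl, H⟩ := reach f hfs vp Ordinal.omega0_pos ht
    have hlω : l < Ordinal.omega0 := hl
    have hsucc : l + 1 < Ordinal.omega0 := by
      rw [Ordinal.add_one_eq_succ]; exact Ordinal.isSuccLimit_omega0.succ_lt hlω
    have hmT : l + 1 < Ordinal.omega0 * 2 + 1 := hsucc.trans hωT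
    refine ⟨((f.symm ⟨l + 1, hmT⟩ : ↥X) : Ordinal), (f.symm _).2, ?_, ?_⟩
    · exact H (l + 1) hmT (by rw [Ordinal.add_one_eq_succ]; exact Order.lt_succ l) hsucc.le
    · rw [hp, Subtype.coe_lt_coe, f.symm.lt_iff_lt]
      exact Subtype.mk_lt_mk.mpr hsucc
  -- cofinality below q, above p
  have cofq : ∀ t < q, ∃ x ∈ X, t < x ∧ x < q ∧ p < x := by
    intro t ht
    obtain ⟨l, hl, H⟩ := reach f hfs vq (Ordinal.omega0_pos.trans hωω2) ht
    have hlq : l < Ordinal.omega0 * 2 := hl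
    set m : Ordinal := max l Ordinal.omega0 + 1 with hm
    have hmax : max l Ordinal.omega0 < Ordinal.omega0 * 2 := max_lt hlq hωω2
    have hmlt : m < Ordinal.omega0 * 2 := by
      rw [hm, Ordinal.add_one_eq_succ]; exact hlim2.succ_lt hmax
    have hmT : m < Ordinal.omega0 * 2 + 1 := hmlt.trans hω2T
    refine ⟨((f.symm ⟨m, hmT⟩ : ↥X) : Ordinal), (f.symm _).2, ?_, ?_, ?_⟩
    · refine H m hmT ?_ hmlt.le
      calc l ≤ max l Ordinal.omega0 := le_max_left _ _
        _ < m := by rw [hm, Ordinal.add_one_eq_succ]; exact Order.lt_succ _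
    · rw [hq, Subtype.coe_lt_coe, f.symm.lt_iff_lt]
      exact Subtype.mk_lt_mk.mpr hmlt
    · rw [hp, Subtype.coe_lt_coe, f.symm.lt_iff_lt]
      refine Subtype.mk_lt_mk.mpr ?_
      calc Ordinal.omega0 ≤ max l Ordinal.omega0 := le_max_right _ _
        _ < m := by rw [hm, Ordinal.add_one_eq_succ]; exact Order.lt_succ _
  exact kill hX hpX hqX hp0 hpq cofp cofq red
end
end Stmt9

/-- `ω^4 ↛_cl (ω·2 + 1, 3)²`: there is a 2-coloring of pairs below `ω^4` with no
red (color 0) closed copy of `ω·2 + 1` and no blue (color 1) triangle. -/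
theorem stmt_9 :
    ∃ c : Ordinal → Ordinal → Fin 2,
      (¬ ∃ X ⊆ Set.Iio (Ordinal.omega0 ^ (4 : Ordinal)),
          IsClosedCopy X (Ordinal.omega0 * 2 + 1) ∧ Homog c X 0) ∧
      (¬ ∃ x y z : Ordinal, x < y ∧ y < z ∧ z < Ordinal.omega0 ^ (4 : Ordinal) ∧
          c x y = 1 ∧ c x z = 1 ∧ c y z = 1) := by
  refine ⟨Stmt9.col, ?_, ?_⟩
  · rintro ⟨X, hX, hcc, hom⟩
    rw [Stmt9.W4_eq] at hX
    refine Stmt9.no_red_copy hX hcc ?_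
    intro x hx y hy hxy hb
    have h0 : Stmt9.col x y = 0 := hom x hx y hy hxy
    rw [Stmt9.col_eq_one hb] at h0
    exact absurd h0 (by decide)
  · rintro ⟨x, y, z, hxy, hyz, hz4, h1, h2, h3⟩
    rw [Stmt9.W4_eq] at hz4
    exact Stmt9.no_triangle (hyz.trans hz4) hz4 hyz
      (Stmt9.blue_of_col h1) (Stmt9.blue_of_col h3) (Stmt9.blue_of_col h2)
end

section
/- For every integer k ≥ 3, A₃(k) ≥ 3^{k−2}/2^{k−1}, where A₃(k) is the least m such that every 3-coloring of ordered pairs of an m-set admits a k-subset S in which every vertex's incoming edges from S avoid at least one color. -/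
open Ordinal Set

/-! ### Auxiliary lemmas for `stmt_15` -/

/-- Greedy extraction of a pre-homogeneous sequence. -/
lemma extract_aux {m : ℕ} (col : Fin m → Fin m → Fin 3 × Fin 3) :
    ∀ t (A : Finset (Fin m)), 9 ^ t ≤ A.card →
    ∃ l : List (Fin m × (Fin 3 × Fin 3)), l.length = t ∧ (∀ p ∈ l, p.1 ∈ A) ∧
      l.Pairwise (fun a b => a.1 ≠ b.1 ∧ col a.1 b.1 = a.2) := by
  intro t
  induction t with
  | zero => intro A _; exact ⟨[], rfl, by simp, List.Pairwise.nil⟩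
  | succ t ih =>
    intro A hA
    have hpos : 0 < A.card := lt_of_lt_of_le (Nat.pow_pos (by norm_num)) hA
    obtain ⟨x, hx⟩ := Finset.card_pos.mp hpos
    have hmaps : ∀ y ∈ A.erase x, col x y ∈ (Finset.univ : Finset (Fin 3 × Fin 3)) := by
      intro y _; exact Finset.mem_univ _
    have hcard : (Finset.univ : Finset (Fin 3 × Fin 3)).card * (9 ^ t - 1) <
        (A.erase x).card := by
      have h9 : (Finset.univ : Finset (Fin 3 × Fin 3)).card = 9 := by decide
      rw [h9, Finset.card_erase_of_mem hx]
      have h1 : 1 ≤ 9 ^ t := Nat.one_le_pow _ _ (by norm_num)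
      have h2 : 9 * 9 ^ t ≤ A.card := by rw [← pow_succ']; exact hA
      omega
    obtain ⟨d, -, hd⟩ := Finset.exists_lt_card_fiber_of_mul_lt_card_of_maps_to hmaps hcard
    set B := (A.erase x).filter (fun y => col x y = d) with hB
    have hBcard : 9 ^ t ≤ B.card := by omega
    obtain ⟨l, hl, hlA, hlp⟩ := ih B hBcard
    have hBsub : ∀ y ∈ B, y ∈ A.erase x ∧ col x y = d := by
      intro y hy
      rw [hB, Finset.mem_filter] at hy
      exact ⟨hy.1, by simpa using hy.2⟩
    refine ⟨(x, d) :: l, by simp [hl], ?_, ?_⟩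
    · intro p hp
      rcases List.mem_cons.mp hp with rfl | hp
      · exact hx
      · exact Finset.mem_of_mem_erase (hBsub _ (hlA _ hp)).1
    · refine List.Pairwise.cons ?_ hlp
      intro b hb
      obtain ⟨hb1, hb2⟩ := hBsub _ (hlA _ hb)
      exact ⟨(Finset.ne_of_mem_erase hb1).symm, hb2⟩

/-- Every 3-pair-coloring list pigeonhole: the total length equals the sum of
filtered lengths. -/
lemma sum_filter_len {α β : Type*} [Fintype β] [DecidableEq β] (l : List (α × β)) :
    ∑ d : β, (l.filter (fun p => p.2 = d)).length = l.length := by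
  induction l with
  | nil => simp
  | cons p l ih =>
    simp only [List.filter_cons]
    have : ∀ d : β, (if (p.2 = d : Bool) then p :: l.filter (fun q => q.2 = d)
        else l.filter (fun q => q.2 = d)).length
        = (if p.2 = d then 1 else 0) + (l.filter (fun q => q.2 = d)).length := by
      intro d
      by_cases h : p.2 = d <;> simp [h, Nat.add_comm]
    simp only [this, Finset.sum_add_distrib, ih, List.length_cons]
    rw [Finset.sum_ite_eq Finset.univ p.2 (fun _ => 1)]
    simp [add_comm]

lemma avoid_exists (k : ℕ) : AvoidProp (9 ^ (9 * (k - 1) + 1)) k := by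
  intro c
  obtain ⟨l, hlen, -, hp⟩ := extract_aux (fun a b => (c a b, c b a)) (9 * (k - 1) + 1)
    Finset.univ (by simp)
  have hsum := sum_filter_len l
  have hex : ∃ d : Fin 3 × Fin 3, k ≤ (l.filter (fun p => p.2 = d)).length := by
    by_contra h
    push_neg at h
    have hle : ∑ d : Fin 3 × Fin 3, (l.filter (fun p => p.2 = d)).length ≤
        9 * (k - 1) := by
      calc ∑ d : Fin 3 × Fin 3, (l.filter (fun p => p.2 = d)).length
          ≤ ∑ _d : Fin 3 × Fin 3, (k - 1) :=
            Finset.sum_le_sum (fun d _ => by have := h d; omega)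
        _ = 9 * (k - 1) := by simp [Finset.card_univ]
    omega
  obtain ⟨d, hd⟩ := hex
  set l2 := (l.filter (fun p => p.2 = d)).take k with hl2
  have hsub : l2.Sublist l := (List.take_sublist _ _).trans List.filter_sublist
  have hl2p := hp.sublist hsub
  have hl2len : l2.length = k := by rw [hl2, List.length_take]; omega
  have hl2d : ∀ p ∈ l2, p.2 = d := by
    intro p hp2
    have hmem : p ∈ l.filter (fun p => p.2 = d) := (List.take_sublist _ _).subset hp2
    simpa using (List.mem_filter.mp hmem).2
  have hnodup : (l2.map Prod.fst).Nodup := by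
    rw [List.Nodup, List.pairwise_map]
    exact hl2p.imp fun h => h.1
  refine ⟨(l2.map Prod.fst).toFinset, ?_, ?_⟩
  · rw [List.toFinset_card_of_nodup hnodup, List.length_map, hl2len]
  · intro x hxS
    have hi : ∀ e : Fin 3 × Fin 3, ∃ i : Fin 3, i ≠ e.1 ∧ i ≠ e.2 := by decide
    obtain ⟨i, hi1, hi2⟩ := hi d
    refine ⟨i, ?_⟩
    intro y hyS hyx
    rw [List.mem_toFinset, List.mem_map] at hxS hyS
    obtain ⟨p, hpl, rfl⟩ := hxS
    obtain ⟨q, hql, rfl⟩ := hyS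
    have hpq : q ≠ p := fun h => hyx (congrArg Prod.fst h)
    have hpw : l2.Pairwise (fun a b =>
        (a.1 ≠ b.1 ∧ (c a.1 b.1, c b.1 a.1) = a.2) ∨
        (b.1 ≠ a.1 ∧ (c b.1 a.1, c a.1 b.1) = b.2)) := hl2p.imp (fun h => Or.inl h)
    have hsymm : Symmetric (fun a b : Fin (9 ^ (9 * (k - 1) + 1)) × (Fin 3 × Fin 3) =>
        (a.1 ≠ b.1 ∧ (c a.1 b.1, c b.1 a.1) = a.2) ∨
        (b.1 ≠ a.1 ∧ (c b.1 a.1, c a.1 b.1) = b.2)) := fun a b h => h.symm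
    have hcase := (letI : Std.Symm _ := ⟨hsymm⟩; hpw.forall hql hpl hpq)
    rcases hcase with ⟨-, h2⟩ | ⟨-, h2⟩
    · rw [hl2d q hql] at h2
      have : c q.1 p.1 = d.1 := (Prod.mk.injEq _ _ _ _).mp h2 |>.1
      rw [this]; exact fun h => hi1 h.symm
    · rw [hl2d p hpl] at h2
      have : c q.1 p.1 = d.2 := (Prod.mk.injEq _ _ _ _).mp h2 |>.2
      rw [this]; exact fun h => hi2 h.symm

/-- Decoder for the 2-valued encoding of colors avoiding `i`. -/
def dec3 (i : Fin 3) (b : Fin 2) : Fin 3 :=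
  if b = 0 then (if i = 0 then 1 else 0) else (if i = 2 then 1 else 2)

/-- Encoder for colors avoiding `i`. -/
def enc3 (i a : Fin 3) : Fin 2 := if a = dec3 i 0 then 0 else 1

lemma dec3_enc3 : ∀ i a : Fin 3, a ≠ i → dec3 i (enc3 i a) = a := by decide

lemma two_pow_le_factorial : ∀ k : ℕ, 4 ≤ k → 2 ^ k ≤ Nat.factorial k := by
  intro k hk
  induction k with
  | zero => omega
  | succ n ih =>
    rcases Nat.lt_or_ge n 4 with h | h
    · interval_cases n <;> simp_all [Nat.factorial]
    · have h1 := ih (by omega)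
      rw [pow_succ, Nat.factorial_succ]
      calc 2 ^ n * 2 ≤ Nat.factorial n * 2 := Nat.mul_le_mul_right _ h1
        _ ≤ (n + 1) * Nat.factorial n := by rw [mul_comm]; exact Nat.mul_le_mul_right _ (by omega)

lemma avoid_lower {m k : ℕ} (hk : 3 ≤ k) (hm1 : 1 ≤ m) (hm : AvoidProp m k) :
    3 ^ (k - 2) ≤ m * 2 ^ (k - 1) := by
  classical
  have hmk : k ≤ m := by
    obtain ⟨S, hS, -⟩ := hm (fun _ _ => 0)
    calc k = S.card := hS.symm
      _ ≤ m := by simpa using Finset.card_le_univ S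
  by_cases hk4 : k ≤ 3
  · have hk3 : k = 3 := le_antisymm hk4 hk
    subst hk3
    norm_num
    omega
  push_neg at hk4
  -- counting argument
  set w : (Fin m → Fin m → Fin 3) → Finset (Fin m) → Fin m → Fin 3 := fun c S x =>
    if h : ∃ i : Fin 3, ∀ y ∈ S, y ≠ x → c y x ≠ i then h.choose else 0 with hw
  have hwprop : ∀ (cc : Fin m → Fin m → Fin 3) (S : Finset (Fin m)),
      (∀ x ∈ S, ∃ i : Fin 3, ∀ y ∈ S, y ≠ x → cc y x ≠ i) →
      ∀ x ∈ S, ∀ y ∈ S, y ≠ x → cc y x ≠ w cc S x := by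
    intro cc S hcc x hx y hy hyx
    have hex := hcc x hx
    rw [hw]
    simp only
    rw [dif_pos hex]
    exact hex.choose_spec y hy hyx
  have key : ∀ S : Finset (Fin m), S.card = k →
      ((Finset.univ : Finset (Fin m → Fin m → Fin 3)).filter
        (fun c => ∀ x ∈ S, ∃ i : Fin 3, ∀ y ∈ S, y ≠ x → c y x ≠ i)).card ≤
      3 ^ k * 2 ^ (k * k) * 3 ^ (m * m - (k * k - k)) := by
    intro S hSk
    set D := ((Finset.univ : Finset (Fin m × Fin m)) \ S.offDiag) with hD
    have hDcard : D.card = m * m - (k * k - k) := by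
      rw [hD, Finset.card_sdiff_of_subset (Finset.subset_univ _), Finset.offDiag_card, hSk]
      congr 1
      rw [Finset.card_univ, Fintype.card_prod, Fintype.card_fin]
    have hcard : 3 ^ k * 2 ^ (k * k) * 3 ^ (m * m - (k * k - k))
        = Fintype.card ((↥S → Fin 3) × (↥S → ↥S → Fin 2) × (↥D → Fin 3)) := by
      simp only [Fintype.card_prod, Fintype.card_fun, Fintype.card_coe, hSk, hDcard,
        Fintype.card_fin]
      ring
    rw [hcard, ← Finset.card_univ]
    apply Finset.card_le_card_of_injOn
      (fun c => (fun x : ↥S => w c S x,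
                 fun x y : ↥S => enc3 (w c S x) (c y x),
                 fun p : ↥D => c p.1.1 p.1.2))
    · intro c _; exact Finset.mem_univ _
    · intro c hc c' hc' heq
      simp only [Finset.coe_filter, Set.mem_setOf_eq, Finset.mem_univ, true_and] at hc hc'
      simp only [Prod.mk.injEq] at heq
      obtain ⟨e1, e2, e3⟩ := heq
      funext y x
      by_cases hcase : y ∈ S ∧ x ∈ S ∧ y ≠ x
      · obtain ⟨hy, hx, hyx⟩ := hcase
        have h1 : w c S x = w c' S x := congrFun e1 ⟨x, hx⟩
        have h2 : enc3 (w c S x) (c y x) = enc3 (w c' S x) (c' y x) :=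
          congrFun (congrFun e2 ⟨x, hx⟩) ⟨y, hy⟩
        have r1 := dec3_enc3 (w c S x) (c y x) (hwprop c S hc x hx y hy hyx)
        have r2 := dec3_enc3 (w c' S x) (c' y x) (hwprop c' S hc' x hx y hy hyx)
        rw [← r1, ← r2, h2, h1]
      · have hmemD : (y, x) ∈ D := by
          rw [hD, Finset.mem_sdiff]
          refine ⟨Finset.mem_univ _, ?_⟩
          rw [Finset.mem_offDiag]
          exact hcase
        exact congrFun e3 ⟨(y, x), hmemD⟩
  have hcover : (Finset.univ : Finset (Fin m → Fin m → Fin 3)) ⊆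
      ((Finset.univ : Finset (Fin m)).powersetCard k).biUnion
        (fun S => Finset.univ.filter
          (fun c => ∀ x ∈ S, ∃ i : Fin 3, ∀ y ∈ S, y ≠ x → c y x ≠ i)) := by
    intro c _
    obtain ⟨S, hS1, hS2⟩ := hm c
    rw [Finset.mem_biUnion]
    exact ⟨S, Finset.mem_powersetCard_univ.mpr hS1,
      Finset.mem_filter.mpr ⟨Finset.mem_univ _, hS2⟩⟩
  have hcount : (3 : ℕ) ^ (m * m) ≤
      m.choose k * (3 ^ k * 2 ^ (k * k) * 3 ^ (m * m - (k * k - k))) := by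
    calc (3 : ℕ) ^ (m * m) = Fintype.card (Fin m → Fin m → Fin 3) := by
          simp only [Fintype.card_fun, Fintype.card_fin]
          rw [← pow_mul]
      _ = (Finset.univ : Finset (Fin m → Fin m → Fin 3)).card := Finset.card_univ.symm
      _ ≤ _ := Finset.card_le_card hcover
      _ ≤ ∑ S ∈ (Finset.univ : Finset (Fin m)).powersetCard k,
            (Finset.univ.filter
              (fun c : Fin m → Fin m → Fin 3 =>
                ∀ x ∈ S, ∃ i : Fin 3, ∀ y ∈ S, y ≠ x → c y x ≠ i)).card :=
          Finset.card_biUnion_le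
      _ ≤ ∑ _S ∈ (Finset.univ : Finset (Fin m)).powersetCard k,
            (3 ^ k * 2 ^ (k * k) * 3 ^ (m * m - (k * k - k))) :=
          Finset.sum_le_sum (fun S hS => key S (Finset.mem_powersetCard.mp hS).2)
      _ = m.choose k * (3 ^ k * 2 ^ (k * k) * 3 ^ (m * m - (k * k - k))) := by
          rw [Finset.sum_const, Finset.card_powersetCard, Finset.card_univ,
            Fintype.card_fin, _root_.smul_eq_mul]
  -- arithmetic cleanup
  have h2k : 2 * k ≤ k * k := by nlinarith
  have hab : m * m - (k * k - k) + (k * k - k) = m * m := by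
    have : k * k ≤ m * m := Nat.mul_le_mul hmk hmk
    omega
  have step1 : 3 ^ (k * k - k) ≤ m.choose k * 3 ^ k * 2 ^ (k * k) := by
    have hXpos : 0 < 3 ^ (m * m - (k * k - k)) := Nat.pow_pos (by norm_num)
    apply Nat.le_of_mul_le_mul_right _ hXpos
    calc 3 ^ (k * k - k) * 3 ^ (m * m - (k * k - k))
        = 3 ^ (m * m) := by rw [← pow_add]; congr 1; omega
      _ ≤ m.choose k * (3 ^ k * 2 ^ (k * k) * 3 ^ (m * m - (k * k - k))) := hcount
      _ = m.choose k * 3 ^ k * 2 ^ (k * k) * 3 ^ (m * m - (k * k - k)) := by ring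
  have step2 : 3 ^ (k * k - 2 * k) ≤ m.choose k * 2 ^ (k * k) := by
    have h3pos : 0 < (3 : ℕ) ^ k := Nat.pow_pos (by norm_num)
    apply Nat.le_of_mul_le_mul_right _ h3pos
    calc 3 ^ (k * k - 2 * k) * 3 ^ k = 3 ^ (k * k - k) := by rw [← pow_add]; congr 1; omega
      _ ≤ m.choose k * 3 ^ k * 2 ^ (k * k) := step1
      _ = m.choose k * 2 ^ (k * k) * 3 ^ k := by ring
  have hchoose : m.choose k * Nat.factorial k ≤ m ^ k := by
    calc m.choose k * Nat.factorial k = Nat.factorial k * m.choose k := mul_comm _ _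
      _ = m.descFactorial k := (Nat.descFactorial_eq_factorial_mul_choose m k).symm
      _ ≤ m ^ k := Nat.descFactorial_le_pow m k
  have step3 : 3 ^ (k * k - 2 * k) * 2 ^ k ≤ m ^ k * 2 ^ (k * k) := by
    calc 3 ^ (k * k - 2 * k) * 2 ^ k ≤ 3 ^ (k * k - 2 * k) * Nat.factorial k :=
          Nat.mul_le_mul_left _ (two_pow_le_factorial k hk4)
      _ ≤ m.choose k * 2 ^ (k * k) * Nat.factorial k :=
          Nat.mul_le_mul_right _ step2
      _ = m.choose k * Nat.factorial k * 2 ^ (k * k) := by ring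
      _ ≤ m ^ k * 2 ^ (k * k) := Nat.mul_le_mul_right _ hchoose
  have step4 : 3 ^ (k * k - 2 * k) ≤ m ^ k * 2 ^ ((k - 1) * k) := by
    have h2pos : 0 < (2 : ℕ) ^ k := Nat.pow_pos (by norm_num)
    apply Nat.le_of_mul_le_mul_right _ h2pos
    calc 3 ^ (k * k - 2 * k) * 2 ^ k ≤ m ^ k * 2 ^ (k * k) := step3
      _ = m ^ k * 2 ^ ((k - 1) * k + k) := by congr 2; cases k with
          | zero => omega
          | succ n => simp [Nat.succ_sub_one]; ring
      _ = m ^ k * 2 ^ ((k - 1) * k) * 2 ^ k := by rw [pow_add]; ring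
  have step5 : (3 ^ (k - 2)) ^ k ≤ (m * 2 ^ (k - 1)) ^ k := by
    calc (3 ^ (k - 2)) ^ k = 3 ^ ((k - 2) * k) := by rw [← pow_mul]
      _ = 3 ^ (k * k - 2 * k) := by rw [Nat.sub_mul]
      _ ≤ m ^ k * 2 ^ ((k - 1) * k) := step4
      _ = m ^ k * (2 ^ (k - 1)) ^ k := by rw [← pow_mul]
      _ = (m * 2 ^ (k - 1)) ^ k := (mul_pow _ _ _).symm
  exact (Nat.pow_le_pow_iff_left (by omega)).mp step5

/-- For every `k ≥ 3`, `A₃(k) ≥ 3^{k−2} / 2^{k−1}`. -/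
theorem stmt_15 (k : ℕ) (hk : 3 ≤ k) :
    (3 : ℝ) ^ (k - 2) / 2 ^ (k - 1) ≤ (A3 k : ℝ) := by
  have hne : {m | 1 ≤ m ∧ AvoidProp m k}.Nonempty :=
    ⟨9 ^ (9 * (k - 1) + 1), Nat.one_le_pow _ _ (by norm_num), avoid_exists k⟩
  have hmem : A3 k ∈ {m | 1 ≤ m ∧ AvoidProp m k} := by
    rw [A3]; exact Nat.sInf_mem hne
  obtain ⟨h1, h2⟩ := hmem
  have hnat : 3 ^ (k - 2) ≤ A3 k * 2 ^ (k - 1) := avoid_lower hk h1 h2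
  rw [div_le_iff₀ (by positivity)]
  exact_mod_cast hnat
end
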